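/- arXiv:2504.20641 — 7 statements merged into one kernel-verified Lean document; each statement's English description precedes it below -/
import Mathlib

section
/- Let A be a unital Banach algebra and δ : A → A a bounded derivation, i.e., a bounded linear map with δ(x·y) = δ(x)·y + x·δ(y). Then for every a ∈ A: δ(exp(a)) = (Σ_{n≥0} (ad_a)ⁿ(δ(a))/(n+1)!)·exp(a), where ad_a(x) := a·x − x·a and the series converges absolutely in norm. -/
open NormedSpace intervalIntegral

set_option maxHeartbeats 2000000 in
/-- Duhamel–Schur: for a bounded derivation `δ` on a unital Banach algebra,
`δ(exp(a)) = (Σ_{n≥0} (ad_a)ⁿ(δ(a))/(n+1)!)·exp(a)`, with absolute norm convergence. -/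
theorem stmt4 (A : Type*) [NormedRing A] [NormedAlgebra ℝ A] [CompleteSpace A]
    (δ : A →L[ℝ] A) (hδ : ∀ x y : A, δ (x * y) = δ x * y + x * δ y)
    (a : A) :
    (Summable fun n : ℕ =>
      ‖((n + 1).factorial : ℝ)⁻¹ • (fun x : A => a * x - x * a)^[n] (δ a)‖) ∧
    δ (NormedSpace.exp a) =
      (∑' n : ℕ, ((n + 1).factorial : ℝ)⁻¹ • (fun x : A => a * x - x * a)^[n] (δ a)) *
        NormedSpace.exp a := by
  let +nondep : NormedAlgebra ℚ A := .restrictScalars ℚ ℝ A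
  let +nondep : NormedAlgebra ℚ (A →L[ℝ] A) := .restrictScalars ℚ ℝ (A →L[ℝ] A)
  haveI : IsScalarTower ℝ (A →L[ℝ] A) (A →L[ℝ] A) :=
    ⟨fun r x y => by ext z; simp [ContinuousLinearMap.mul_apply]⟩
  haveI : SMulCommClass ℝ (A →L[ℝ] A) (A →L[ℝ] A) :=
    ⟨fun r x y => by ext z; simp [ContinuousLinearMap.mul_apply]⟩
  set L : A →L[ℝ] A := ContinuousLinearMap.mul ℝ A a - (ContinuousLinearMap.mul ℝ A).flip a
    with hLdef
  have hL : ∀ x : A, L x = a * x - x * a := by intro x; simp [hLdef]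
  have hiter : ∀ (n : ℕ) (x : A), (fun x : A => a * x - x * a)^[n] x = (L ^ n) x := by
    intro n
    induction n with
    | zero => intro x; simp
    | succ n ih =>
      intro x
      rw [Function.iterate_succ_apply, ih, pow_succ, ContinuousLinearMap.mul_apply, hL]
  have hnorm : ∀ n : ℕ, ‖(L ^ n) (δ a)‖ ≤ ‖L‖ ^ n * ‖δ a‖ := by
    intro n
    induction n with
    | zero => simp
    | succ n ih =>
      rw [pow_succ', ContinuousLinearMap.mul_apply]
      calc ‖L ((L ^ n) (δ a))‖ ≤ ‖L‖ * ‖(L ^ n) (δ a)‖ := L.le_opNorm _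
        _ ≤ ‖L‖ * (‖L‖ ^ n * ‖δ a‖) := mul_le_mul_of_nonneg_left ih (norm_nonneg L)
        _ = ‖L‖ ^ (n + 1) * ‖δ a‖ := by ring
  have claim1 : Summable fun n : ℕ => ‖((n + 1).factorial : ℝ)⁻¹ • (L ^ n) (δ a)‖ := by
    apply Summable.of_nonneg_of_le (fun n => norm_nonneg _) _
      ((Real.summable_pow_div_factorial ‖L‖).mul_right ‖δ a‖)
    intro n
    have hfacpos : (0 : ℝ) < n.factorial := by exact_mod_cast n.factorial_pos
    have h1 : ((n + 1).factorial : ℝ)⁻¹ ≤ (n.factorial : ℝ)⁻¹ := by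
      apply inv_anti₀ hfacpos
      exact_mod_cast Nat.factorial_le (Nat.le_succ n)
    calc ‖((n + 1).factorial : ℝ)⁻¹ • (L ^ n) (δ a)‖
        = ((n + 1).factorial : ℝ)⁻¹ * ‖(L ^ n) (δ a)‖ := by
          rw [norm_smul, Real.norm_eq_abs, abs_of_nonneg (by positivity)]
      _ ≤ (n.factorial : ℝ)⁻¹ * (‖L‖ ^ n * ‖δ a‖) :=
          mul_le_mul h1 (hnorm n) (norm_nonneg _) (by positivity)
      _ = ‖L‖ ^ n / n.factorial * ‖δ a‖ := by ring
  have hcommaa : ∀ s t : ℝ, Commute (s • a) (t • a) :=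
    fun s t => ((Commute.refl a).smul_left s).smul_right t
  have he_add : ∀ s t : ℝ, exp (s • a) * exp (t • a) = exp ((s + t) • a) := by
    intro s t
    rw [← exp_add_of_commute (hcommaa s t), ← add_smul]
  have he0 : exp ((0 : ℝ) • a) = 1 := by simp [exp_zero]
  have hδ1 : δ (1 : A) = 0 := by
    have h := hδ 1 1
    rw [mul_one, one_mul, mul_one] at h
    exact (left_eq_add.mp h)
  -- the function g s = ∫₀ˢ exp(tL)(δ a) dt
  have hcontEb : Continuous fun t : ℝ => (exp (t • L)) (δ a) := by
    have h1 : Continuous fun t : ℝ => exp (t • L) :=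
      (exp_continuous (𝔸 := A →L[ℝ] A)).comp (continuous_id.smul continuous_const)
    exact (ContinuousLinearMap.apply ℝ A (δ a)).continuous.comp h1
  set g : ℝ → A := fun s => ∫ t in (0:ℝ)..s, (exp (t • L)) (δ a) with hg
  have hg_deriv : ∀ s : ℝ, HasDerivAt g ((exp (s • L)) (δ a)) s :=
    fun s => (hcontEb.integral_hasStrictDerivAt 0 s).hasDerivAt
  have hcommL : ∀ t : ℝ, Commute L (exp (t • L)) :=
    fun t => ((Commute.refl L).smul_right t).exp_right
  have hEb_deriv : ∀ t : ℝ,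
      HasDerivAt (fun u : ℝ => (exp (u • L)) (δ a)) (L ((exp (t • L)) (δ a))) t := by
    intro t
    have h1 := (hasDerivAt_exp_smul_const L t).clm_apply (hasDerivAt_const t (δ a))
    have h2 : L ((exp (t • L)) (δ a)) = (exp (t • L) * L) (δ a) := by
      rw [← ContinuousLinearMap.mul_apply, (hcommL t).eq]
    rw [h2]
    simpa using h1
  have hLg : ∀ s : ℝ, L (g s) = (exp (s • L)) (δ a) - δ a := by
    intro s
    have hint : IntervalIntegrable (fun t : ℝ => (exp (t • L)) (δ a))
        MeasureTheory.volume 0 s := hcontEb.intervalIntegrable 0 s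
    simp only [hg]
    rw [← ContinuousLinearMap.intervalIntegral_comp_comm L hint]
    have hftc := intervalIntegral.integral_eq_sub_of_hasDerivAt
      (f := fun u : ℝ => (exp (u • L)) (δ a)) (f' := fun u : ℝ => L ((exp (u • L)) (δ a)))
      (fun t _ => hEb_deriv t) ((L.continuous.comp hcontEb).intervalIntegrable 0 s)
    rw [hftc]
    show (exp (s • L)) (δ a) - (exp ((0:ℝ) • L)) (δ a) = _
    rw [(zero_smul ℝ L : (0:ℝ) • L = 0), exp_zero, ContinuousLinearMap.one_apply]
  -- the function k s = δ(exp(sa)) exp(-sa)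
  set k : ℝ → A := fun s => δ (exp (s • a)) * exp (-(s • a)) with hk
  have hca : ∀ s : ℝ, a * exp (s • a) = exp (s • a) * a := by
    intro s
    exact (((Commute.refl a).smul_right s).exp_right).eq
  have hk_deriv : ∀ s : ℝ, HasDerivAt k (δ a + L (k s)) s := by
    intro s
    have h1 : HasDerivAt (fun u : ℝ => δ (exp (u • a))) (δ (a * exp (s • a))) s :=
      δ.hasFDerivAt.comp_hasDerivAt s (hasDerivAt_exp_smul_const' a s)
    have h2 : HasDerivAt (fun u : ℝ => exp (-(u • a))) (-(a * exp (-(s • a)))) s := by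
      have h := hasDerivAt_exp_smul_const' a (-s)
      have hneg : HasDerivAt (fun u : ℝ => -u) (-1 : ℝ) s := (hasDerivAt_id s).neg
      have h3 := h.scomp s hneg
      simpa [Function.comp_def, neg_smul, neg_one_smul] using h3
    have h3 := h1.mul h2
    have hone : exp (s • a) * exp (-(s • a)) = 1 := by
      rw [← neg_smul, he_add, add_neg_cancel]
      exact he0
    have hca' : a * exp (-(s • a)) = exp (-(s • a)) * a := by
      have := hca (-s)
      rwa [neg_smul] at this
    have expand : δ (a * exp (s • a)) * exp (-(s • a))
          + δ (exp (s • a)) * -(a * exp (-(s • a))) =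
        δ a * (exp (s • a) * exp (-(s • a)))
          + (a * (δ (exp (s • a)) * exp (-(s • a)))
            - δ (exp (s • a)) * exp (-(s • a)) * a) := by
      rw [hδ a (exp (s • a)), hca']
      noncomm_ring
    have heq : δ (a * exp (s • a)) * exp (-(s • a))
        + δ (exp (s • a)) * -(a * exp (-(s • a))) = δ a + L (k s) := by
      rw [expand, hone, mul_one, hL]
    rw [heq] at h3
    exact h3
  -- w = k - g satisfies w' = L w
  have hw_deriv : ∀ s : ℝ, HasDerivAt (fun u : ℝ => k u - g u) (L (k s - g s)) s := by
    intro s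
    have h := (hk_deriv s).sub (hg_deriv s)
    have heq : δ a + L (k s) - (exp (s • L)) (δ a) = L (k s - g s) := by
      rw [map_sub, hLg s]
      abel
    rwa [heq] at h
  -- v s = exp(-sL)(w s) has zero derivative
  have hv_deriv : ∀ s : ℝ, HasDerivAt (fun u : ℝ => (exp (-(u • L))) (k u - g u)) 0 s := by
    intro s
    have hc : HasDerivAt (fun u : ℝ => exp (-(u • L)))
        (-(exp (-(s • L)) * L)) s := by
      have h := hasDerivAt_exp_smul_const L (-s)
      have hneg : HasDerivAt (fun u : ℝ => -u) (-1 : ℝ) s := (hasDerivAt_id s).neg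
      have h3 := h.scomp s hneg
      simpa [Function.comp_def, neg_smul, neg_one_smul] using h3
    have h := hc.clm_apply (hw_deriv s)
    have heq : (-(exp (-(s • L)) * L)) (k s - g s)
        + (exp (-(s • L))) (L (k s - g s)) = 0 := by
      simp [ContinuousLinearMap.mul_apply]
    rwa [heq] at h
  have hvconst : (exp (-((1:ℝ) • L))) (k 1 - g 1) = (exp (-((0:ℝ) • L))) (k 0 - g 0) :=
    is_const_of_deriv_eq_zero (fun u => (hv_deriv u).differentiableAt)
      (fun u => (hv_deriv u).deriv) 1 0
  have hw0 : k 0 - g 0 = 0 := by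
    have hk0 : k 0 = 0 := by
      simp only [hk, zero_smul, neg_zero, exp_zero, hδ1, zero_mul]
    have hg0 : g 0 = 0 := by
      simp only [hg, intervalIntegral.integral_same]
    rw [hk0, hg0, sub_zero]
  have hw1 : k 1 - g 1 = 0 := by
    have h : (exp (-((1:ℝ) • L))) (k 1 - g 1) = 0 := by
      rw [hvconst, hw0, map_zero]
    have hmul : exp ((1:ℝ) • L) * exp (-((1:ℝ) • L)) = 1 := by
      rw [← exp_add_of_commute (Commute.refl ((1:ℝ) • L)).neg_right, add_neg_cancel, exp_zero]
    calc k 1 - g 1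
        = ((exp ((1:ℝ) • L) * exp (-((1:ℝ) • L))) : A →L[ℝ] A) (k 1 - g 1) := by
          rw [hmul, ContinuousLinearMap.one_apply]
      _ = (exp ((1:ℝ) • L)) ((exp (-((1:ℝ) • L))) (k 1 - g 1)) := rfl
      _ = 0 := by rw [h, map_zero]
  have hkg : k 1 = g 1 := sub_eq_zero.mp hw1
  -- main identity: δ(exp a) = g 1 * exp a
  have h1e : exp ((1:ℝ) • a) = exp a := by rw [one_smul]
  have honee : exp (-((1:ℝ) • a)) * exp ((1:ℝ) • a) = 1 := by
    rw [← neg_smul, he_add, neg_add_cancel]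
    exact he0
  have hmain : δ (exp a) = g 1 * exp a := by
    calc δ (exp a)
        = δ (exp ((1:ℝ) • a)) * (exp (-((1:ℝ) • a)) * exp ((1:ℝ) • a)) := by
          rw [honee, mul_one, h1e]
      _ = δ (exp ((1:ℝ) • a)) * exp (-((1:ℝ) • a)) * exp ((1:ℝ) • a) :=
          (mul_assoc _ _ _).symm
      _ = k 1 * exp ((1:ℝ) • a) := by simp only [hk]
      _ = g 1 * exp a := by rw [hkg, h1e]
  -- identify g 1 with the tsum
  have htsum_exp : ∀ t : ℝ, (exp (t • L)) (δ a)
      = ∑' n : ℕ, (t ^ n * ((n.factorial : ℝ))⁻¹) • (L ^ n) (δ a) := by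
    intro t
    have hsum : Summable fun n : ℕ => ((n.factorial : ℝ))⁻¹ • (t • L) ^ n :=
      expSeries_summable' (𝕂 := ℝ) (t • L)
    have h0 : (exp (t • L)) (δ a)
        = (ContinuousLinearMap.apply ℝ A (δ a))
            (∑' n : ℕ, ((n.factorial : ℝ))⁻¹ • (t • L) ^ n) := by
      rw [ContinuousLinearMap.apply_apply, exp_eq_tsum ℝ]
    rw [h0, (ContinuousLinearMap.apply ℝ A (δ a)).map_tsum hsum]
    congr 1
    funext n
    rw [ContinuousLinearMap.apply_apply, ContinuousLinearMap.smul_apply, smul_pow,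
      ContinuousLinearMap.smul_apply, smul_smul, mul_comm]
  set f : ℕ → C(ℝ, A) := fun n =>
    ⟨fun t => (t ^ n * ((n.factorial : ℝ))⁻¹) • (L ^ n) (δ a),
      (((continuous_pow n).mul continuous_const).smul continuous_const)⟩ with hf
  have hsummable : Summable fun n : ℕ =>
      ‖(f n).restrict (⟨Set.uIcc (0:ℝ) 1, isCompact_uIcc⟩ : TopologicalSpace.Compacts ℝ)‖ := by
    apply Summable.of_nonneg_of_le (fun n => norm_nonneg _) _
      ((Real.summable_pow_div_factorial ‖L‖).mul_right ‖δ a‖)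
    intro n
    apply (ContinuousMap.norm_le _ (by positivity)).mpr
    rintro ⟨x, hx⟩
    have hxmem : x ∈ Set.Icc (0:ℝ) 1 := by
      have hx' : x ∈ Set.uIcc (0:ℝ) 1 := hx
      rwa [Set.uIcc_of_le (by norm_num : (0:ℝ) ≤ 1)] at hx'
    have habs : |x| ≤ 1 := abs_le.mpr ⟨by linarith [hxmem.1], hxmem.2⟩
    have hout : ‖((f n).restrict (⟨Set.uIcc (0:ℝ) 1, isCompact_uIcc⟩ :
        TopologicalSpace.Compacts ℝ)) ⟨x, hx⟩‖
        = ‖(x ^ n * ((n.factorial : ℝ))⁻¹) • (L ^ n) (δ a)‖ := rfl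
    rw [hout]
    calc ‖(x ^ n * ((n.factorial : ℝ))⁻¹) • (L ^ n) (δ a)‖
        = |x| ^ n * ((n.factorial : ℝ))⁻¹ * ‖(L ^ n) (δ a)‖ := by
          rw [norm_smul, Real.norm_eq_abs, abs_mul, abs_pow,
            abs_of_nonneg (by positivity : (0:ℝ) ≤ ((n.factorial : ℝ))⁻¹)]
      _ ≤ 1 * ((n.factorial : ℝ))⁻¹ * (‖L‖ ^ n * ‖δ a‖) := by
          have h1 : |x| ^ n ≤ 1 := pow_le_one₀ (abs_nonneg x) habs
          have h2 := hnorm n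
          have hfac : (0:ℝ) ≤ ((n.factorial : ℝ))⁻¹ := by positivity
          calc |x| ^ n * ((n.factorial : ℝ))⁻¹ * ‖(L ^ n) (δ a)‖
              ≤ 1 * ((n.factorial : ℝ))⁻¹ * ‖(L ^ n) (δ a)‖ := by
                apply mul_le_mul_of_nonneg_right _ (norm_nonneg _)
                exact mul_le_mul_of_nonneg_right h1 hfac
            _ ≤ 1 * ((n.factorial : ℝ))⁻¹ * (‖L‖ ^ n * ‖δ a‖) := by
                apply mul_le_mul_of_nonneg_left h2 (by positivity)
      _ = ‖L‖ ^ n / n.factorial * ‖δ a‖ := by ring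
  have hf_sum := intervalIntegral.hasSum_intervalIntegral_of_summable_norm
    (a := (0:ℝ)) (b := 1) hsummable
  have hg1 : (∫ t in (0:ℝ)..1, ∑' n : ℕ, (f n) t) = g 1 := by
    simp only [hg]
    apply intervalIntegral.integral_congr
    intro t _
    show ∑' n : ℕ, (f n) t = (exp (t • L)) (δ a)
    rw [htsum_exp t]
    exact tsum_congr fun n => rfl
  rw [hg1] at hf_sum
  have hint_eval : ∀ n : ℕ, (∫ t in (0:ℝ)..1, (f n) t)
      = ((n + 1).factorial : ℝ)⁻¹ • (L ^ n) (δ a) := by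
    intro n
    have hfn : ∀ t : ℝ, (f n) t = (t ^ n * ((n.factorial : ℝ))⁻¹) • (L ^ n) (δ a) :=
      fun t => rfl
    simp only [hfn]
    rw [intervalIntegral.integral_smul_const]
    congr 1
    rw [intervalIntegral.integral_mul_const, integral_pow]
    have hfs : ((n + 1).factorial : ℝ) = (n + 1 : ℝ) * n.factorial := by
      rw [Nat.factorial_succ]
      push_cast
      ring
    rw [hfs, mul_inv]
    norm_num
  have hHasSum : HasSum (fun n : ℕ => ((n + 1).factorial : ℝ)⁻¹ • (L ^ n) (δ a)) (g 1) := by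
    have := hf_sum
    simp only [hint_eval] at this
    exact this
  constructor
  · simp only [hiter]
    exact claim1
  · have ht : (∑' n : ℕ, ((n + 1).factorial : ℝ)⁻¹ • (fun x : A => a * x - x * a)^[n] (δ a))
        = ∑' n : ℕ, ((n + 1).factorial : ℝ)⁻¹ • (L ^ n) (δ a) := by
      congr 1
      funext n
      rw [hiter]
    rw [ht, hHasSum.tsum_eq, ← hmain]
end

section
/- Let A be a unital Banach algebra, a ∈ A, and γ : ℝ → A a continuously differentiable map. Then t ↦ exp(−γ(t)) is differentiable, and for every t ∈ ℝ: exp(γ(t))·a·exp(−γ(t)) + exp(γ(t))·(d/dt)[exp(−γ(t))] = Σ_{n≥0} (ad_{γ(t)})ⁿ(a)/n! − Σ_{n≥0} (ad_{γ(t)})ⁿ(γ′(t))/(n+1)!, where ad_c(x) := c·x − x·c and both series converge absolutely in norm. -/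
open NormedSpace ContinuousLinearMap Finset

set_option linter.unusedSectionVars false
set_option maxHeartbeats 1000000

namespace Stmt5Aux

variable {A : Type*} [NormedRing A] [NormedAlgebra ℝ A] [CompleteSpace A]

noncomputable def Lop (x : A) : A →L[ℝ] A := ContinuousLinearMap.mul ℝ A x
noncomputable def Rop (x : A) : A →L[ℝ] A := (ContinuousLinearMap.mul ℝ A).flip x

@[simp] lemma Lop_apply (x z : A) : Lop x z = x * z := rfl
@[simp] lemma Rop_apply (x z : A) : Rop x z = z * x := rfl

lemma Lop_neg (x : A) : Lop (-x) = -Lop x := by ext z; simp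
lemma Rop_neg (x : A) : Rop (-x) = -Rop x := by ext z; simp

lemma commute_Lop_Rop (x y : A) : Commute (Lop x) (Rop y) := by
  ext z; simp [ContinuousLinearMap.mul_apply', mul_assoc]

lemma Lop_pow_apply (x z : A) (n : ℕ) : (Lop x ^ n) z = x ^ n * z := by
  induction n with
  | zero => simp
  | succ n ih => rw [pow_succ', ContinuousLinearMap.mul_apply, ih, Lop_apply, pow_succ', mul_assoc]

lemma Rop_pow_apply (x z : A) (n : ℕ) : (Rop x ^ n) z = z * x ^ n := by
  induction n with
  | zero => simp
  | succ n ih => rw [pow_succ', ContinuousLinearMap.mul_apply, ih, Rop_apply, pow_succ, mul_assoc]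

lemma ad_pow_apply (x z : A) (n : ℕ) :
    ((Lop x - Rop x) ^ n) z = (fun w : A => x * w - w * x)^[n] z := by
  induction n with
  | zero => simp
  | succ n ih =>
      rw [Function.iterate_succ_apply', pow_succ', ContinuousLinearMap.mul_apply, ih]
      simp

lemma opnorm_pow_le (T : A →L[ℝ] A) (n : ℕ) : ‖T ^ n‖ ≤ ‖T‖ ^ n := by
  induction n with
  | zero => rw [pow_zero, pow_zero]; exact ContinuousLinearMap.norm_id_le
  | succ n ih =>
      calc ‖T ^ (n+1)‖ = ‖T * T ^ n‖ := by rw [pow_succ']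
        _ ≤ ‖T‖ * ‖T ^ n‖ := norm_mul_le _ _
        _ ≤ ‖T‖ * ‖T‖ ^ n := by nlinarith [norm_nonneg T, norm_nonneg (T^n)]
        _ = ‖T‖ ^ (n+1) := (pow_succ' _ _).symm

lemma tsum_apply' (F : ℕ → A →L[ℝ] A) (h : Summable F) (z : A) :
    (∑' n, F n) z = ∑' n, F n z := by
  have := (ContinuousLinearMap.apply ℝ A z).map_tsum h
  simpa using this

lemma summable_exp_ser {B : Type*} [NormedRing B] [NormedAlgebra ℝ B] [CompleteSpace B] (T : B) :
    Summable (fun n : ℕ => ((n.factorial : ℝ))⁻¹ • T ^ n) := by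
  simpa using expSeries_summable' (𝕂 := ℝ) T

lemma exp_eq_tsum' {B : Type*} [NormedRing B] [NormedAlgebra ℝ B] [CompleteSpace B] (T : B) :
    exp T = ∑' n : ℕ, ((n.factorial : ℝ))⁻¹ • T ^ n := by
  rw [exp_eq_tsum ℝ]

lemma exp_op_apply (T : A →L[ℝ] A) (z : A) :
    exp T z = ∑' n : ℕ, ((n.factorial : ℝ))⁻¹ • (T ^ n) z := by
  rw [exp_eq_tsum' T, tsum_apply' _ (summable_exp_ser T)]
  simp

lemma exp_Lop (x : A) : exp (Lop x) = Lop (exp x) := by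
  ext z
  rw [exp_op_apply]
  have h1 : (fun n : ℕ => ((n.factorial : ℝ))⁻¹ • ((Lop x ^ n) z))
      = fun n : ℕ => Rop z (((n.factorial : ℝ))⁻¹ • x ^ n) := by
    funext n; rw [Lop_pow_apply]; simp [smul_mul_assoc]
  rw [tsum_congr (fun n => congrFun h1 n), ← (Rop z).map_tsum (summable_exp_ser x),
    ← exp_eq_tsum' x]
  simp

lemma exp_Rop (x : A) : exp (Rop x) = Rop (exp x) := by
  ext z
  rw [exp_op_apply]
  have h1 : (fun n : ℕ => ((n.factorial : ℝ))⁻¹ • ((Rop x ^ n) z))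
      = fun n : ℕ => Lop z (((n.factorial : ℝ))⁻¹ • x ^ n) := by
    funext n; rw [Rop_pow_apply]; simp [mul_smul_comm]
  rw [tsum_congr (fun n => congrFun h1 n), ← (Lop z).map_tsum (summable_exp_ser x),
    ← exp_eq_tsum' x]
  simp

lemma exp_ad_apply (x z : A) :
    exp (Lop x - Rop x) z = exp x * (z * exp (-x)) := by
  have h : Lop x - Rop x = Lop x + Rop (-x) := by rw [Rop_neg, sub_eq_add_neg]
  rw [h, exp_add_of_commute_of_mem_ball (𝕂 := ℝ) (commute_Lop_Rop x (-x))
    (by simp [expSeries_radius_eq_top]) (by simp [expSeries_radius_eq_top]), ContinuousLinearMap.mul_apply,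
    exp_Lop, exp_Rop, Rop_apply, Lop_apply]


/-- S_m = ∑_{k≤m} L^k R^(m-k) in a ring. -/
def Spoly {B : Type*} [Ring B] (L R : B) (m : ℕ) : B :=
  ∑ k ∈ range (m + 1), L ^ k * R ^ (m - k)

lemma Spoly_succ {B : Type*} [Ring B] (L R : B) (h : Commute L R) (m : ℕ) :
    Spoly L R (m + 1) = L ^ (m + 1) + R * Spoly L R m := by
  rw [Spoly, sum_range_succ, Nat.sub_self, pow_zero, mul_one, Spoly, mul_sum, add_comm]
  congr 1
  refine sum_congr rfl fun k hk => ?_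
  rw [mem_range] at hk
  have he : m + 1 - k = (m - k) + 1 := by omega
  rw [he, pow_succ', ← mul_assoc, ← mul_assoc, (h.symm.pow_right k).eq]

lemma Qlemma {B : Type*} [Ring B] [Algebra ℝ B] (L R : B) (h : Commute L R) (m : ℕ) :
    ∑ j ∈ range (m + 1), (((m + 1).choose j : ℝ)) • ((-L) ^ j * (L - R) ^ (m - j))
      = ((-1 : ℝ) ^ m) • Spoly L R m := by
  induction m with
  | zero => simp [Spoly]
  | succ m ih =>
      have hLu : Commute (-L) (L - R) := ((Commute.refl L).sub_right h).neg_left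
      rw [sum_range_succ']
      have h0 : (((m + 2).choose 0 : ℝ)) • ((-L) ^ 0 * (L - R) ^ (m + 1 - 0)) =
          (L - R) ^ (m + 1) := by simp
      rw [h0]
      have hsplit : ∀ i ∈ range (m + 1),
          (((m + 2).choose (i + 1) : ℝ)) • ((-L) ^ (i + 1) * (L - R) ^ (m + 1 - (i + 1)))
          = (((m + 1).choose i : ℝ)) • ((-L) * ((-L) ^ i * (L - R) ^ (m - i)))
            + (((m + 1).choose (i + 1) : ℝ)) • ((-L) ^ (i + 1) * (L - R) ^ (m - i)) := by
        intro i hi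
        rw [mem_range] at hi
        have hc : ((m + 2).choose (i + 1) : ℝ)
            = ((m + 1).choose i : ℝ) + ((m + 1).choose (i + 1) : ℝ) := by
          rw [show m + 2 = (m + 1) + 1 from rfl, Nat.choose_succ_succ]
          push_cast; ring
        have he : m + 1 - (i + 1) = m - i := by omega
        rw [hc, add_smul, he, pow_succ', mul_assoc]
      rw [sum_congr rfl hsplit, sum_add_distrib]
      have hfirst : ∑ i ∈ range (m + 1),
          (((m + 1).choose i : ℝ)) • ((-L) * ((-L) ^ i * (L - R) ^ (m - i)))
          = (-L) * (((-1 : ℝ) ^ m) • Spoly L R m) := by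
        rw [← ih, mul_sum]
        exact sum_congr rfl fun i _ => (mul_smul_comm _ _ _).symm
      have hsecond : ∑ i ∈ range (m + 1),
          (((m + 1).choose (i + 1) : ℝ)) • ((-L) ^ (i + 1) * (L - R) ^ (m - i))
          = (L - R) * (((-1 : ℝ) ^ m) • Spoly L R m) - (L - R) ^ (m + 1) + (-L) ^ (m + 1) := by
        have hu : (L - R) * (((-1 : ℝ) ^ m) • Spoly L R m)
            = ∑ j ∈ range (m + 1),
                (((m + 1).choose j : ℝ)) • ((-L) ^ j * (L - R) ^ (m + 1 - j)) := by
          rw [← ih, mul_sum]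
          refine sum_congr rfl fun j hj => ?_
          rw [mem_range] at hj
          rw [mul_smul_comm]
          congr 1
          have he : m + 1 - j = (m - j) + 1 := by omega
          rw [he, pow_succ', ← mul_assoc, (hLu.symm.pow_right j).eq, mul_assoc]
        have hext : ∑ j ∈ range (m + 2),
            (((m + 1).choose j : ℝ)) • ((-L) ^ j * (L - R) ^ (m + 1 - j))
            = (∑ j ∈ range (m + 1),
                (((m + 1).choose j : ℝ)) • ((-L) ^ j * (L - R) ^ (m + 1 - j)))
              + (-L) ^ (m + 1) := by
          rw [sum_range_succ]
          simp
        have hshift : ∑ j ∈ range (m + 2),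
            (((m + 1).choose j : ℝ)) • ((-L) ^ j * (L - R) ^ (m + 1 - j))
            = (∑ i ∈ range (m + 1),
                  (((m + 1).choose (i + 1) : ℝ)) • ((-L) ^ (i + 1) * (L - R) ^ (m - i)))
              + (L - R) ^ (m + 1) := by
          rw [sum_range_succ', Nat.choose_zero_right]
          simp [Nat.succ_sub_succ]
        have hh := hext.symm.trans hshift
        rw [← hu] at hh
        -- hh : Y + (-L)^(m+1) = ∑ ... + (L-R)^(m+1)
        have h2 := eq_sub_of_add_eq hh.symm
        rw [h2]
        abel
      rw [hfirst, hsecond]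
      have hSnew := Spoly_succ L R h m
      have hnegL : (-L) ^ (m + 1) = ((-1 : ℝ) ^ (m + 1)) • L ^ (m + 1) := by
        rw [show -L = (-1 : ℝ) • L by simp, smul_pow]
      rw [hSnew, hnegL, mul_smul_comm, mul_smul_comm, smul_add]
      have hkey : (-1 : ℝ) ^ m • (-L * Spoly L R m) + (-1 : ℝ) ^ m • ((L - R) * Spoly L R m)
          = (-1 : ℝ) ^ (m + 1) • (R * Spoly L R m) := by
        rw [← smul_add]
        have hcomb : -L * Spoly L R m + (L - R) * Spoly L R m = -(R * Spoly L R m) := by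
          rw [← add_mul, show -L + (L - R) = -R by abel, neg_mul]
        rw [hcomb, smul_neg, pow_succ, mul_neg_one, neg_smul]
      have habs : ∀ (a b c u k : B), a + b = k →
          a + (b - u + c) + u = c + k := by
        intro a b c u k hk; rw [← hk]; abel
      exact habs _ _ _ _ _ hkey

lemma Pm {B : Type*} [Ring B] [Algebra ℝ B] (L R : B) (h : Commute L R) (m : ℕ) :
    ∑ k ∈ range (m + 1),
        (((k.factorial : ℝ))⁻¹ • (-L) ^ k) *
          ((((m - k + 1).factorial : ℝ))⁻¹ • (L - R) ^ (m - k))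
      = ((-1 : ℝ) ^ m * (((m + 1).factorial : ℝ))⁻¹) • Spoly L R m := by
  have hterm : ∀ k ∈ range (m + 1),
      (((k.factorial : ℝ))⁻¹ • (-L) ^ k) *
          ((((m - k + 1).factorial : ℝ))⁻¹ • (L - R) ^ (m - k))
        = (((m + 1).factorial : ℝ))⁻¹ •
            ((((m + 1).choose k : ℝ)) • ((-L) ^ k * (L - R) ^ (m - k))) := by
    intro k hk
    rw [mem_range] at hk
    rw [smul_mul_smul_comm, smul_smul]
    congr 1
    have h1 : m - k + 1 = m + 1 - k := by omega
    have h2 : (m + 1).choose k * (k.factorial * (m + 1 - k).factorial)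
        = (m + 1).factorial := by
      rw [← mul_assoc]
      exact Nat.choose_mul_factorial_mul_factorial (by omega)
    have hk0 : (k.factorial : ℝ) ≠ 0 := Nat.cast_ne_zero.2 k.factorial_ne_zero
    have hm0 : ((m + 1 - k).factorial : ℝ) ≠ 0 := Nat.cast_ne_zero.2 (Nat.factorial_ne_zero _)
    have hmm : (((m + 1).factorial : ℝ)) ≠ 0 := Nat.cast_ne_zero.2 (Nat.factorial_ne_zero _)
    rw [h1]
    field_simp
    rw [← h2]
    push_cast
    ring
  rw [sum_congr rfl hterm, ← smul_sum, Qlemma L R h m, smul_smul, mul_comm]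

/-- Derivative of a power of a curve in a normed ring. -/
lemma hasDerivAt_pow_curve {A : Type*} [NormedRing A] [NormedAlgebra ℝ A]
    {c : ℝ → A} {c' : A} {t : ℝ} (hc : HasDerivAt c c' t) (n : ℕ) :
    HasDerivAt (fun s => c s ^ n)
      (∑ j ∈ range n, c t ^ j * c' * c t ^ (n - 1 - j)) t := by
  induction n with
  | zero => simpa using hasDerivAt_const t (1 : A)
  | succ n ih =>
      have h := hc.mul ih
      have heq : (c * fun s => c s ^ n) = fun s => c s ^ (n + 1) := by
        funext s; rw [Pi.mul_apply, ← pow_succ']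
      rw [heq] at h
      convert h using 1
      rw [sum_range_succ']
      have hj : ∀ j ∈ range n,
          c t ^ (j + 1) * c' * c t ^ (n + 1 - 1 - (j + 1))
            = c t * (c t ^ j * c' * c t ^ (n - 1 - j)) := by
        intro j hj
        rw [mem_range] at hj
        have he : n + 1 - 1 - (j + 1) = n - 1 - j := by omega
        rw [he, pow_succ', mul_assoc, mul_assoc, mul_assoc]
      rw [sum_congr rfl hj, ← mul_sum]
      have h0 : c t ^ 0 * c' * c t ^ (n + 1 - 1 - 0) = c' * c t ^ n := by
        simp
      rw [h0]
      abel


lemma norm_Spoly_le (L R : A →L[ℝ] A) (m : ℕ) :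
    ‖Spoly L R m‖ ≤ (m + 1) * (max (max ‖L‖ ‖R‖) 1) ^ m := by
  set K := max (max ‖L‖ ‖R‖) 1 with hK
  have hK1 : (1 : ℝ) ≤ K := le_max_right _ _
  have hK0 : (0 : ℝ) ≤ K := le_trans zero_le_one hK1
  have hterm : ∀ k ∈ range (m + 1), ‖L ^ k * R ^ (m - k)‖ ≤ K ^ m := by
    intro k hk
    rw [mem_range] at hk
    calc ‖L ^ k * R ^ (m - k)‖ ≤ ‖L ^ k‖ * ‖R ^ (m - k)‖ := norm_mul_le _ _
      _ ≤ K ^ k * K ^ (m - k) := by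
          apply mul_le_mul _ _ (norm_nonneg _) (pow_nonneg hK0 _)
          · exact le_trans (opnorm_pow_le L k)
              (pow_le_pow_left₀ (norm_nonneg _) (le_trans (le_max_left _ _) (le_max_left _ _)) _)
          · exact le_trans (opnorm_pow_le R _)
              (pow_le_pow_left₀ (norm_nonneg _) (le_trans (le_max_right _ _) (le_max_left _ _)) _)
      _ = K ^ (k + (m - k)) := (pow_add K k (m - k)).symm
      _ = K ^ m := by congr 1; omega
  calc ‖Spoly L R m‖ ≤ ∑ k ∈ range (m + 1), ‖L ^ k * R ^ (m - k)‖ := norm_sum_le _ _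
    _ ≤ ∑ _k ∈ range (m + 1), K ^ m := sum_le_sum hterm
    _ = (m + 1) * K ^ m := by rw [sum_const, card_range, nsmul_eq_mul]; push_cast; ring

lemma summable_Phi_norm (L R : A →L[ℝ] A) :
    Summable (fun m : ℕ =>
      ‖((-1 : ℝ) ^ m * (((m + 1).factorial : ℝ))⁻¹) • Spoly L R m‖) := by
  set K := max (max ‖L‖ ‖R‖) 1 with hK
  have hK1 : (1 : ℝ) ≤ K := le_max_right _ _
  have hK0 : (0 : ℝ) ≤ K := le_trans zero_le_one hK1
  apply Summable.of_nonneg_of_le (fun n => norm_nonneg _)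
    (fun m => ?_) (Real.summable_pow_div_factorial K)
  rw [norm_smul ((-1 : ℝ) ^ m * (((m + 1).factorial : ℝ))⁻¹) (Spoly L R m)]
  have h1 : ‖(-1 : ℝ) ^ m * (((m + 1).factorial : ℝ))⁻¹‖ = (((m + 1).factorial : ℝ))⁻¹ := by
    rw [norm_mul, norm_pow, norm_neg, norm_one, one_pow, one_mul, Real.norm_eq_abs,
      abs_of_nonneg (by positivity)]
  rw [h1]
  calc (((m + 1).factorial : ℝ))⁻¹ * ‖Spoly L R m‖
      ≤ (((m + 1).factorial : ℝ))⁻¹ * ((m + 1) * K ^ m) := by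
        apply mul_le_mul_of_nonneg_left (norm_Spoly_le L R m) (by positivity)
    _ = K ^ m / (m.factorial : ℝ) := by
        rw [Nat.factorial_succ]
        have h2 : (m.factorial : ℝ) ≠ 0 := Nat.cast_ne_zero.2 (Nat.factorial_ne_zero _)
        field_simp
        push_cast
        ring

lemma summable_Fad_norm (T : A →L[ℝ] A) :
    Summable (fun n : ℕ => ‖(((n + 1).factorial : ℝ))⁻¹ • T ^ n‖) := by
  apply Summable.of_nonneg_of_le (fun n => norm_nonneg _) (fun n => ?_)
    (Real.summable_pow_div_factorial ‖T‖)
  rw [norm_smul ((((n + 1).factorial : ℝ))⁻¹) (T ^ n)]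
  have h1 : ‖(((n + 1).factorial : ℝ))⁻¹‖ ≤ ((n.factorial : ℝ))⁻¹ := by
    rw [Real.norm_eq_abs, abs_of_nonneg (by positivity)]
    apply inv_anti₀ (by positivity)
    exact_mod_cast Nat.factorial_le (by omega)
  calc ‖(((n + 1).factorial : ℝ))⁻¹‖ * ‖T ^ n‖ ≤ ((n.factorial : ℝ))⁻¹ * ‖T‖ ^ n :=
      mul_le_mul h1 (opnorm_pow_le T n) (norm_nonneg _) (by positivity)
    _ = ‖T‖ ^ n / (n.factorial : ℝ) := by rw [div_eq_mul_inv, mul_comm]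

noncomputable def Phi (x : A) : A →L[ℝ] A :=
  ∑' m : ℕ, ((-1 : ℝ) ^ m * (((m + 1).factorial : ℝ))⁻¹) • Spoly (Lop x) (Rop x) m

lemma Phi_def (x : A) : Phi x
    = ∑' m : ℕ, ((-1 : ℝ) ^ m * (((m + 1).factorial : ℝ))⁻¹) • Spoly (Lop x) (Rop x) m := rfl

noncomputable def Fad (x : A) : A →L[ℝ] A :=
  ∑' n : ℕ, (((n + 1).factorial : ℝ))⁻¹ • (Lop x - Rop x) ^ n

lemma Fad_def (x : A) : Fad x
    = ∑' n : ℕ, (((n + 1).factorial : ℝ))⁻¹ • (Lop x - Rop x) ^ n := rfl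

lemma exp_Lop_mul_Phi (x : A) : exp (Lop x) * Phi x = Fad x := by
  have hf : Summable fun n : ℕ => ‖((n.factorial : ℝ))⁻¹ • (-(Lop x)) ^ n‖ := by
    simpa using norm_expSeries_summable' (𝕂 := ℝ) (-(Lop x))
  have hg := summable_Fad_norm (Lop x - Rop x)
  have hPhi : exp (-(Lop x)) * Fad x = Phi x := by
    rw [exp_eq_tsum' (-(Lop x)), Fad_def,
      tsum_mul_tsum_eq_tsum_sum_range_of_summable_norm hf hg, Phi_def]
    exact tsum_congr fun m => Pm (Lop x) (Rop x) (commute_Lop_Rop x x) m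
  rw [← hPhi, ← mul_assoc, ← exp_add_of_commute_of_mem_ball (𝕂 := ℝ) ((Commute.refl (Lop x)).neg_right)
      (by simp [expSeries_radius_eq_top]) (by simp [expSeries_radius_eq_top]),
    add_neg_cancel, exp_zero, one_mul]

lemma Fad_apply (x v : A) :
    Fad x v = ∑' n : ℕ, (((n + 1).factorial : ℝ))⁻¹ • (fun w : A => x * w - w * x)^[n] v := by
  rw [Fad_def, tsum_apply' _ ((summable_Fad_norm (Lop x - Rop x)).of_norm)]
  refine tsum_congr fun n => ?_
  rw [ContinuousLinearMap.smul_apply, ad_pow_apply]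

lemma Spoly_apply (x v : A) (m : ℕ) :
    (Spoly (Lop x) (Rop x) m) v = ∑ k ∈ range (m + 1), x ^ k * v * x ^ (m - k) := by
  rw [Spoly, ContinuousLinearMap.sum_apply]
  refine sum_congr rfl fun k _ => ?_
  rw [ContinuousLinearMap.mul_apply, Rop_pow_apply, Lop_pow_apply, mul_assoc]

lemma Phi_apply (x v : A) :
    Phi x v = ∑' m : ℕ, ((-1 : ℝ) ^ m * (((m + 1).factorial : ℝ))⁻¹)
      • (Spoly (Lop x) (Rop x) m) v := by
  rw [Phi_def, tsum_apply' _ ((summable_Phi_norm (Lop x) (Rop x)).of_norm)]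
  exact tsum_congr fun m => ContinuousLinearMap.smul_apply _ _ _

lemma term_reindex (x v : A) (m : ℕ) :
    ((((m + 1).factorial : ℝ))⁻¹ •
        ∑ j ∈ range (m + 1), (-x) ^ j * (-v) * (-x) ^ (m + 1 - 1 - j))
      = -(((-1 : ℝ) ^ m * (((m + 1).factorial : ℝ))⁻¹) • (Spoly (Lop x) (Rop x) m) v) := by
  have hterm : ∀ j ∈ range (m + 1), (-x) ^ j * (-v) * (-x) ^ (m + 1 - 1 - j)
      = (-((-1 : ℝ) ^ m)) • (x ^ j * v * x ^ (m - j)) := by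
    intro j hj
    rw [mem_range] at hj
    have he : m + 1 - 1 - j = m - j := by omega
    rw [he, show (-x) = (-1 : ℝ) • x by simp, show -v = (-1 : ℝ) • v by simp,
      smul_pow, smul_pow, smul_mul_smul_comm, smul_mul_smul_comm]
    congr 1
    have hpow : (-1 : ℝ) ^ j * (-1 : ℝ) ^ (m - j) = (-1 : ℝ) ^ m := by
      rw [← pow_add]; congr 1; omega
    linear_combination (-1 : ℝ) * hpow
  rw [sum_congr rfl hterm, ← smul_sum, ← Spoly_apply, smul_smul, ← neg_smul]
  congr 1
  ring

lemma exp_mul_derivSeries (x v : A)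
    (hsum : Summable fun n : ℕ =>
      ((n.factorial : ℝ))⁻¹ • ∑ j ∈ range n, (-x) ^ j * (-v) * (-x) ^ (n - 1 - j)) :
    exp x *
        ∑' n : ℕ, ((n.factorial : ℝ))⁻¹ • ∑ j ∈ range n, (-x) ^ j * (-v) * (-x) ^ (n - 1 - j)
      = -(Fad x v) := by
  rw [Summable.tsum_eq_zero_add hsum]
  simp only [range_zero, sum_empty, smul_zero, zero_add]
  rw [tsum_congr (fun m => term_reindex x v m), tsum_neg, ← Phi_apply]
  have h2 : exp x * (Phi x v) = Fad x v := by
    rw [show exp x * (Phi x v) = Lop (exp x) (Phi x v) from rfl, ← exp_Lop,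
      ← ContinuousLinearMap.mul_apply, exp_Lop_mul_Phi]
  rw [mul_neg, h2]


lemma key_hasDerivAt (γ γ' : ℝ → A) (hγ : ∀ t : ℝ, HasDerivAt γ (γ' t) t)
    (hγ' : Continuous γ') (t₀ : ℝ) :
    HasDerivAt (fun s => exp (-γ s))
      (∑' n : ℕ, ((n.factorial : ℝ))⁻¹ •
        ∑ j ∈ range n, (-γ t₀) ^ j * (-γ' t₀) * (-γ t₀) ^ (n - 1 - j)) t₀ ∧
    Summable (fun n : ℕ => ((n.factorial : ℝ))⁻¹ •
        ∑ j ∈ range n, (-γ t₀) ^ j * (-γ' t₀) * (-γ t₀) ^ (n - 1 - j)) := by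
  have hγc : Continuous γ := continuous_iff_continuousAt.2 fun t => (hγ t).continuousAt
  obtain ⟨C₁, hC₁⟩ := (isCompact_closedBall t₀ 1).exists_bound_of_continuousOn hγc.continuousOn
  obtain ⟨C₂, hC₂⟩ := (isCompact_closedBall t₀ 1).exists_bound_of_continuousOn hγ'.continuousOn
  set M : ℝ := max (max C₁ C₂) (max ‖(1 : A)‖ 1) with hM
  have hM1 : (1 : ℝ) ≤ M := le_trans (le_max_right _ _) (le_max_right _ _)
  have hM0 : (0 : ℝ) ≤ M := zero_le_one.trans hM1
  have hMone : ‖(1 : A)‖ ≤ M := le_trans (le_max_left _ _) (le_max_right _ _)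
  have hMγ : ∀ s ∈ Metric.ball t₀ 1, ‖γ s‖ ≤ M := fun s hs =>
    le_trans (hC₁ s (Metric.ball_subset_closedBall hs))
      (le_trans (le_max_left _ _) (le_max_left _ _))
  have hMγ' : ∀ s ∈ Metric.ball t₀ 1, ‖γ' s‖ ≤ M := fun s hs =>
    le_trans (hC₂ s (Metric.ball_subset_closedBall hs))
      (le_trans (le_max_right _ _) (le_max_left _ _))
  have hpow : ∀ z : A, ‖z‖ ≤ M → ∀ j : ℕ, ‖z ^ j‖ ≤ M ^ (j + 1) := by
    intro z hz j
    cases j with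
    | zero => simpa using hMone
    | succ j =>
        calc ‖z ^ (j + 1)‖ ≤ ‖z‖ ^ (j + 1) := norm_pow_le' z (Nat.succ_pos j)
          _ ≤ M ^ (j + 1) := pow_le_pow_left₀ (norm_nonneg z) hz _
          _ ≤ M ^ (j + 1 + 1) := pow_le_pow_right₀ hM1 (by omega)
  set u : ℕ → ℝ := fun n => n * M ^ (n + 2) * ((n.factorial : ℝ))⁻¹ with hu
  have hu_sum : Summable u := by
    rw [← summable_nat_add_iff 1]
    refine Summable.congr ((Real.summable_pow_div_factorial M).mul_left (M ^ 3)) fun n => ?_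
    have h2 : ((n.factorial : ℝ)) ≠ 0 := Nat.cast_ne_zero.2 (Nat.factorial_ne_zero _)
    simp only [hu]
    rw [Nat.factorial_succ]
    push_cast
    have h3 : ((n : ℝ) + 1) ≠ 0 := by positivity
    field_simp
    ring
  have hderiv : ∀ (n : ℕ) (s : ℝ),
      HasDerivAt (fun r => ((n.factorial : ℝ))⁻¹ • (-γ r) ^ n)
        (((n.factorial : ℝ))⁻¹ •
          ∑ j ∈ range n, (-γ s) ^ j * (-γ' s) * (-γ s) ^ (n - 1 - j)) s := by
    intro n s
    exact HasDerivAt.const_smul ((n.factorial : ℝ))⁻¹ (hasDerivAt_pow_curve ((hγ s).neg) n)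
  have hbound : ∀ (n : ℕ), ∀ s ∈ Metric.ball t₀ 1,
      ‖((n.factorial : ℝ))⁻¹ •
        ∑ j ∈ range n, (-γ s) ^ j * (-γ' s) * (-γ s) ^ (n - 1 - j)‖ ≤ u n := by
    intro n s hs
    have hsum_le : ‖∑ j ∈ range n, (-γ s) ^ j * (-γ' s) * (-γ s) ^ (n - 1 - j)‖
        ≤ n * M ^ (n + 2) := by
      have hterm : ∀ j ∈ range n,
          ‖(-γ s) ^ j * (-γ' s) * (-γ s) ^ (n - 1 - j)‖ ≤ M ^ (n + 2) := by
        intro j hj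
        rw [mem_range] at hj
        have h1 : ‖(-γ s) ^ j‖ ≤ M ^ (j + 1) :=
          hpow _ (by rw [norm_neg]; exact hMγ s hs) j
        have h2 : ‖(-γ s) ^ (n - 1 - j)‖ ≤ M ^ (n - 1 - j + 1) :=
          hpow _ (by rw [norm_neg]; exact hMγ s hs) _
        have h3 : ‖-γ' s‖ ≤ M := by rw [norm_neg]; exact hMγ' s hs
        calc ‖(-γ s) ^ j * (-γ' s) * (-γ s) ^ (n - 1 - j)‖
            ≤ ‖(-γ s) ^ j * (-γ' s)‖ * ‖(-γ s) ^ (n - 1 - j)‖ := norm_mul_le _ _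
          _ ≤ (‖(-γ s) ^ j‖ * ‖-γ' s‖) * ‖(-γ s) ^ (n - 1 - j)‖ :=
              mul_le_mul_of_nonneg_right (norm_mul_le _ _) (norm_nonneg _)
          _ ≤ (M ^ (j + 1) * M) * M ^ (n - 1 - j + 1) := by
              apply mul_le_mul (mul_le_mul h1 h3 (norm_nonneg _) (by positivity)) h2
                (norm_nonneg _) (by positivity)
          _ = M ^ (j + 1 + 1 + (n - 1 - j + 1)) := by rw [← pow_succ, ← pow_add]
          _ = M ^ (n + 2) := by congr 1; omega
      calc ‖∑ j ∈ range n, (-γ s) ^ j * (-γ' s) * (-γ s) ^ (n - 1 - j)‖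
          ≤ ∑ j ∈ range n, ‖(-γ s) ^ j * (-γ' s) * (-γ s) ^ (n - 1 - j)‖ := norm_sum_le _ _
        _ ≤ ∑ _j ∈ range n, M ^ (n + 2) := sum_le_sum hterm
        _ = n * M ^ (n + 2) := by rw [sum_const, card_range, nsmul_eq_mul]
    rw [norm_smul, Real.norm_eq_abs, abs_of_nonneg (by positivity)]
    calc ((n.factorial : ℝ))⁻¹ * ‖∑ j ∈ range n, (-γ s) ^ j * (-γ' s) * (-γ s) ^ (n - 1 - j)‖
        ≤ ((n.factorial : ℝ))⁻¹ * (n * M ^ (n + 2)) :=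
          mul_le_mul_of_nonneg_left hsum_le (by positivity)
      _ = u n := by simp only [hu]; ring
  have hsummable : Summable (fun n : ℕ => ((n.factorial : ℝ))⁻¹ •
      ∑ j ∈ range n, (-γ t₀) ^ j * (-γ' t₀) * (-γ t₀) ^ (n - 1 - j)) := by
    apply Summable.of_norm
    exact Summable.of_nonneg_of_le (fun n => norm_nonneg _)
      (fun n => hbound n t₀ (Metric.mem_ball_self one_pos)) hu_sum
  refine ⟨?_, hsummable⟩
  have hfg : ∀ s ∈ Metric.ball t₀ 1,
      Filter.Tendsto (fun N => ∑ n ∈ range N, ((n.factorial : ℝ))⁻¹ • (-γ s) ^ n)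
        Filter.atTop (nhds (exp (-γ s))) := by
    intro s _
    have hsum : HasSum (fun n : ℕ => ((n.factorial : ℝ))⁻¹ • (-γ s) ^ n) (exp (-γ s)) := by
      simpa using exp_series_hasSum_exp' (𝕂 := ℝ) (-γ s)
    exact hsum.tendsto_sum_nat
  exact hasDerivAt_of_tendstoUniformlyOn Metric.isOpen_ball
    (tendstoUniformlyOn_tsum_nat hu_sum hbound)
    (Filter.Eventually.of_forall fun N s hs => HasDerivAt.sum fun n _ => hderiv n s)
    (fun s hs => by simpa only [Finset.sum_apply] using hfg s hs) (Metric.mem_ball_self one_pos)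

end Stmt5Aux

open Stmt5Aux NormedSpace Finset in
/-- for a C¹ curve `γ : ℝ → A` in a unital Banach algebra and `a ∈ A`,
`t ↦ exp(−γ(t))` is differentiable and
`exp(γ(t))·a·exp(−γ(t)) + exp(γ(t))·(d/dt)exp(−γ(t))
  = Σ_{n≥0} (ad_{γ(t)})ⁿ(a)/n! − Σ_{n≥0} (ad_{γ(t)})ⁿ(γ′(t))/(n+1)!`,
with both series converging absolutely in norm. -/
theorem stmt5 (A : Type*) [NormedRing A] [NormedAlgebra ℝ A] [CompleteSpace A]
    (a : A) (γ γ' : ℝ → A)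
    (hγ : ∀ t : ℝ, HasDerivAt γ (γ' t) t) (hγ' : Continuous γ') :
    (∀ t : ℝ, DifferentiableAt ℝ (fun s : ℝ => NormedSpace.exp (-γ s)) t) ∧
    (∀ t : ℝ, Summable fun n : ℕ =>
      ‖(n.factorial : ℝ)⁻¹ • (fun x : A => γ t * x - x * γ t)^[n] a‖) ∧
    (∀ t : ℝ, Summable fun n : ℕ =>
      ‖((n + 1).factorial : ℝ)⁻¹ • (fun x : A => γ t * x - x * γ t)^[n] (γ' t)‖) ∧
    (∀ t : ℝ,
      NormedSpace.exp (γ t) * a * NormedSpace.exp (-γ t) +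
        NormedSpace.exp (γ t) * deriv (fun s : ℝ => NormedSpace.exp (-γ s)) t =
      (∑' n : ℕ, (n.factorial : ℝ)⁻¹ • (fun x : A => γ t * x - x * γ t)^[n] a) -
      (∑' n : ℕ, ((n + 1).factorial : ℝ)⁻¹ •
        (fun x : A => γ t * x - x * γ t)^[n] (γ' t))) := by
  refine ⟨fun t => ((key_hasDerivAt γ γ' hγ hγ' t).1).differentiableAt, ?_, ?_, ?_⟩
  · -- summability of the first series
    intro t
    set T : A →L[ℝ] A := Lop (γ t) - Rop (γ t) with hT
    apply Summable.of_nonneg_of_le (fun n => norm_nonneg _) (fun n => ?_)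
      ((Real.summable_pow_div_factorial ‖T‖).mul_right ‖a‖)
    rw [show (fun x : A => γ t * x - x * γ t)^[n] a = (T ^ n) a from (ad_pow_apply _ _ _).symm,
      norm_smul, Real.norm_eq_abs, abs_of_nonneg (by positivity)]
    calc ((n.factorial : ℝ))⁻¹ * ‖(T ^ n) a‖
        ≤ ((n.factorial : ℝ))⁻¹ * (‖T ^ n‖ * ‖a‖) := by
          apply mul_le_mul_of_nonneg_left ((T ^ n).le_opNorm a) (by positivity)
      _ ≤ ((n.factorial : ℝ))⁻¹ * (‖T‖ ^ n * ‖a‖) := by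
          apply mul_le_mul_of_nonneg_left
            (mul_le_mul_of_nonneg_right (opnorm_pow_le T n) (norm_nonneg a)) (by positivity)
      _ = ‖T‖ ^ n / (n.factorial : ℝ) * ‖a‖ := by ring
  · -- summability of the second series
    intro t
    set T : A →L[ℝ] A := Lop (γ t) - Rop (γ t) with hT
    apply Summable.of_nonneg_of_le (fun n => norm_nonneg _) (fun n => ?_)
      ((Real.summable_pow_div_factorial ‖T‖).mul_right ‖γ' t‖)
    rw [show (fun x : A => γ t * x - x * γ t)^[n] (γ' t) = (T ^ n) (γ' t) from
        (ad_pow_apply _ _ _).symm,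
      norm_smul, Real.norm_eq_abs, abs_of_nonneg (by positivity)]
    have hfac : (((n + 1).factorial : ℝ))⁻¹ ≤ ((n.factorial : ℝ))⁻¹ := by
      apply inv_anti₀ (by positivity)
      exact_mod_cast Nat.factorial_le (by omega)
    calc (((n + 1).factorial : ℝ))⁻¹ * ‖(T ^ n) (γ' t)‖
        ≤ ((n.factorial : ℝ))⁻¹ * ‖(T ^ n) (γ' t)‖ :=
          mul_le_mul_of_nonneg_right hfac (norm_nonneg _)
      _ ≤ ((n.factorial : ℝ))⁻¹ * (‖T ^ n‖ * ‖γ' t‖) := by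
          apply mul_le_mul_of_nonneg_left ((T ^ n).le_opNorm (γ' t)) (by positivity)
      _ ≤ ((n.factorial : ℝ))⁻¹ * (‖T‖ ^ n * ‖γ' t‖) := by
          apply mul_le_mul_of_nonneg_left
            (mul_le_mul_of_nonneg_right (opnorm_pow_le T n) (norm_nonneg _)) (by positivity)
      _ = ‖T‖ ^ n / (n.factorial : ℝ) * ‖γ' t‖ := by ring
  · -- the main identity
    intro t
    obtain ⟨hD, hS⟩ := key_hasDerivAt γ γ' hγ hγ' t
    rw [hD.deriv]
    have h1 : NormedSpace.exp (γ t) * a * NormedSpace.exp (-γ t)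
        = ∑' n : ℕ, (n.factorial : ℝ)⁻¹ • (fun x : A => γ t * x - x * γ t)^[n] a := by
      rw [mul_assoc, ← exp_ad_apply, exp_op_apply]
      exact tsum_congr fun n => by rw [ad_pow_apply]
    have h2 : NormedSpace.exp (γ t) *
        (∑' n : ℕ, ((n.factorial : ℝ))⁻¹ •
          ∑ j ∈ range n, (-γ t) ^ j * (-γ' t) * (-γ t) ^ (n - 1 - j))
        = -(∑' n : ℕ, ((n + 1).factorial : ℝ)⁻¹ •
            (fun x : A => γ t * x - x * γ t)^[n] (γ' t)) := by
      rw [exp_mul_derivSeries (γ t) (γ' t) hS, Fad_apply]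
    rw [h1, h2, sub_eq_add_neg]
end

section
/- Let A be a unital Banach algebra, D : A → A a bounded derivation (a bounded linear map with D(x·y) = D(x)·y + x·D(y)), and b ∈ A. Let R_b : A → A be right multiplication, R_b(x) := x·b, and set W_t := exp(t(D + R_b))(1), the exponential of the bounded operator t(D + R_b) applied to the unit 1. Then for every t ∈ ℝ and every x ∈ A: exp(t(D + R_b))(x) = exp(tD)(x)·W_t. -/
open Finset Finset.Nat

/-- Norm bound for iterated applications of a continuous linear map. -/
lemma pow_apply_norm_le {A : Type*} [NormedRing A] [NormedAlgebra ℝ A]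
    (T : A →L[ℝ] A) (z : A) (n : ℕ) : ‖(T ^ n) z‖ ≤ ‖T‖ ^ n * ‖z‖ := by
  induction n with
  | zero => simp
  | succ n ih =>
    rw [pow_succ', ContinuousLinearMap.mul_apply]
    calc ‖T ((T ^ n) z)‖ ≤ ‖T‖ * ‖(T ^ n) z‖ := T.le_opNorm _
      _ ≤ ‖T‖ * (‖T‖ ^ n * ‖z‖) :=
        mul_le_mul_of_nonneg_left ih (norm_nonneg T)
      _ = ‖T‖ ^ (n + 1) * ‖z‖ := by ring

/-- Summability of the norms of the exponential-type series applied to a vector. -/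
lemma summable_norm_exp_apply {A : Type*} [NormedRing A] [NormedAlgebra ℝ A]
    (T : A →L[ℝ] A) (t : ℝ) (z : A) :
    Summable fun n : ℕ => ‖(((n.factorial : ℝ))⁻¹ * t ^ n) • ((T ^ n) z)‖ := by
  refine Summable.of_nonneg_of_le (fun n => norm_nonneg _) (fun n => ?_)
    ((Real.summable_pow_div_factorial (|t| * ‖T‖)).mul_left ‖z‖)
  rw [norm_smul]
  have h1 : ‖((n.factorial : ℝ))⁻¹ * t ^ n‖ = ((n.factorial : ℝ))⁻¹ * |t| ^ n := by
    rw [norm_mul, Real.norm_eq_abs, Real.norm_eq_abs, abs_of_nonneg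
      (by positivity : (0:ℝ) ≤ ((n.factorial : ℝ))⁻¹), abs_pow]
  rw [h1]
  calc ((n.factorial : ℝ))⁻¹ * |t| ^ n * ‖(T ^ n) z‖
      ≤ ((n.factorial : ℝ))⁻¹ * |t| ^ n * (‖T‖ ^ n * ‖z‖) := by
        apply mul_le_mul_of_nonneg_left (pow_apply_norm_le T z n) (by positivity)
    _ = ‖z‖ * ((|t| * ‖T‖) ^ n / (n.factorial : ℝ)) := by
        rw [mul_pow]; field_simp

set_option synthInstance.maxHeartbeats 400000 in
/-- The exponential of `t • T` applied to a vector, as a series. -/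
lemma exp_smul_apply {A : Type*} [NormedRing A] [NormedAlgebra ℝ A] [CompleteSpace A]
    (T : A →L[ℝ] A) (t : ℝ) (z : A) :
    NormedSpace.exp (t • T) z
      = ∑' n : ℕ, (((n.factorial : ℝ))⁻¹ * t ^ n) • ((T ^ n) z) := by
  haveI : IsScalarTower ℝ (A →L[ℝ] A) (A →L[ℝ] A) := by
    constructor; intro r f g; ext w
    simp [ContinuousLinearMap.mul_apply]
  haveI : SMulCommClass ℝ (A →L[ℝ] A) (A →L[ℝ] A) := by
    constructor; intro r f g; ext w
    simp [ContinuousLinearMap.mul_apply]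
  rw [NormedSpace.exp_eq_tsum ℝ]
  have hs : Summable fun n : ℕ => ((n.factorial : ℝ))⁻¹ • (t • T) ^ n :=
    NormedSpace.expSeries_summable' (t • T)
  have := (ContinuousLinearMap.apply ℝ A z).map_tsum hs
  simp only [ContinuousLinearMap.apply_apply] at this
  rw [this]
  refine tsum_congr fun n => ?_
  rw [smul_pow, smul_smul]
  simp [ContinuousLinearMap.smul_apply]

/-- dressing cocycle intertwines flows: for a bounded derivation `D` and
right multiplication `R_b`, with `W_t := exp(t(D+R_b))(1)`, one has
`exp(t(D+R_b))(x) = exp(tD)(x)·W_t`. -/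
theorem stmt6 (A : Type*) [NormedRing A] [NormedAlgebra ℝ A] [CompleteSpace A]
    (D : A →L[ℝ] A) (hD : ∀ x y : A, D (x * y) = D x * y + x * D y)
    (b : A) (Rb : A →L[ℝ] A) (hRb : ∀ x : A, Rb x = x * b)
    (t : ℝ) (x : A) :
    NormedSpace.exp (t • (D + Rb)) x =
      NormedSpace.exp (t • D) x * NormedSpace.exp (t • (D + Rb)) 1 := by
  set L : A →L[ℝ] A := D + Rb with hLdef
  -- twisted Leibniz rule
  have hL : ∀ u y : A, L (u * y) = D u * y + u * L y := by
    intro u y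
    simp only [hLdef, ContinuousLinearMap.add_apply, hD u y, hRb]
    rw [mul_add, mul_assoc, add_assoc]
  -- iterated twisted Leibniz rule
  have hpow : ∀ (n : ℕ) (u y : A),
      (L ^ n) (u * y) =
        ∑ p ∈ antidiagonal n, (n.choose p.1 : ℝ) • ((D ^ p.1) u * (L ^ p.2) y) := by
    intro n
    induction n with
    | zero => intro u y; simp
    | succ n ih =>
      intro u y
      have h1 : (L ^ (n + 1)) (u * y) = (L ^ n) (D u * y) + (L ^ n) (u * L y) := by
        rw [pow_succ, ContinuousLinearMap.mul_apply, hL, map_add]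
      rw [h1, ih, ih]
      have hDs : ∀ k : ℕ, (D ^ k) (D u) = (D ^ (k + 1)) u := by
        intro k; rw [pow_succ, ContinuousLinearMap.mul_apply]
      have hLs : ∀ m : ℕ, (L ^ m) (L y) = (L ^ (m + 1)) y := by
        intro m; rw [pow_succ, ContinuousLinearMap.mul_apply]
      simp only [hDs, hLs]
      -- second sum: reindex over antidiagonal (n+1)
      have e1 : (∑ p ∈ antidiagonal n,
            (n.choose p.1 : ℝ) • ((D ^ p.1) u * (L ^ (p.2 + 1)) y))
          = ∑ p ∈ antidiagonal (n + 1),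
            (n.choose p.1 : ℝ) • ((D ^ p.1) u * (L ^ p.2) y) := by
        rw [Finset.Nat.sum_antidiagonal_succ'
          (f := fun p => (n.choose p.1 : ℝ) • ((D ^ p.1) u * (L ^ p.2) y))]
        simp [Nat.choose_succ_self]
      rw [e1,
        Finset.Nat.sum_antidiagonal_succ
          (f := fun p => (n.choose p.1 : ℝ) • ((D ^ p.1) u * (L ^ p.2) y)),
        Finset.Nat.sum_antidiagonal_succ
          (f := fun p => ((n + 1).choose p.1 : ℝ) • ((D ^ p.1) u * (L ^ p.2) y))]
      simp only [Nat.choose_succ_succ, Nat.cast_add, add_smul, Finset.sum_add_distrib,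
        Nat.choose_zero_right, Nat.cast_one]
      abel
  -- coefficient identity
  have hc : ∀ k m : ℕ, (((k + m).factorial : ℝ))⁻¹ * t ^ (k + m) * ((k + m).choose k : ℝ)
      = (((k.factorial : ℝ))⁻¹ * t ^ k) * (((m.factorial : ℝ))⁻¹ * t ^ m) := by
    intro k m
    have h := Nat.add_choose_mul_factorial_mul_factorial k m
    rw [← Nat.choose_symm_add] at h
    have h' : (((k + m).choose k : ℝ)) * (k.factorial : ℝ) * (m.factorial : ℝ)
        = ((k + m).factorial : ℝ) := by exact_mod_cast congrArg (Nat.cast (R := ℝ)) h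
    have hk : (k.factorial : ℝ) ≠ 0 := by positivity
    have hm : (m.factorial : ℝ) ≠ 0 := by positivity
    have hkm : ((k + m).factorial : ℝ) ≠ 0 := by positivity
    field_simp [pow_add]
    rw [← h']; ring
  -- expand both exponentials as series
  rw [exp_smul_apply, exp_smul_apply, exp_smul_apply]
  rw [tsum_mul_tsum_eq_tsum_sum_antidiagonal_of_summable_norm
    (summable_norm_exp_apply D t x) (summable_norm_exp_apply L t 1)]
  refine tsum_congr fun n => ?_
  have hx1 : (L ^ n) x = (L ^ n) (x * 1) := by rw [mul_one]
  rw [hx1, hpow n x 1, Finset.smul_sum]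
  refine Finset.sum_congr rfl fun p hp => ?_
  have hpn : p.1 + p.2 = n := Finset.HasAntidiagonal.mem_antidiagonal.mp hp
  rw [smul_mul_smul_comm, smul_smul]
  congr 1
  rw [← hpn, hc p.1 p.2]
end

section
/- Let A be a unital Banach algebra, D : A → A a bounded derivation (a bounded linear map with D(x·y) = D(x)·y + x·D(y)), and b ∈ A. Let R_b : A → A be right multiplication, R_b(x) := x·b, and set W_t := exp(t(D + R_b))(1), the exponential of the bounded operator t(D + R_b) applied to the unit 1. Then the cocycle relation W_{s+t} = exp(tD)(W_s)·W_t holds for all s, t ∈ ℝ. -/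
open NormedSpace

/-- Uniqueness for the linear ODE `y' = L y` in a Banach algebra:
any global solution equals `exp(t•L)` applied to its initial value. -/
lemma ode_exp_unique {A : Type*} [NormedRing A] [NormedAlgebra ℝ A] [CompleteSpace A]
    (L : A →L[ℝ] A) (y : ℝ → A) (hy : ∀ u, HasDerivAt y (L (y u)) u) (t : ℝ) :
    y t = exp (t • L) (y 0) := by
  have hcomm : ∀ u : ℝ, L * exp (u • L) = exp (u • L) * L := fun u =>
    (hasDerivAt_exp_smul_const' L u).unique (hasDerivAt_exp_smul_const L u)
  set m : ℝ → A := fun u => exp ((-u) • L) (y u) with hm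
  have hmd : ∀ u, HasDerivAt m 0 u := by
    intro u
    have h1 : HasDerivAt (fun v : ℝ => exp (v • L)) (L * exp ((-u) • L)) (-u) :=
      hasDerivAt_exp_smul_const' L (-u)
    have h2 : HasDerivAt (fun u : ℝ => -u) (-1 : ℝ) u := (hasDerivAt_id u).neg
    have hc : HasDerivAt (fun u : ℝ => exp ((-u) • L))
        (-(L * exp ((-u) • L))) u := by
      have := h1.scomp u h2
      simpa [Function.comp_def] using this
    have := hc.clm_apply (hy u)
    have hz : (-(L * exp ((-u) • L))) (y u) + exp ((-u) • L) (L (y u)) = 0 := by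
      rw [hcomm]
      simp [ContinuousLinearMap.mul_apply]
    rw [hz] at this
    exact this
  have hconst : m t = m 0 :=
    is_const_of_deriv_eq_zero (fun u => (hmd u).differentiableAt)
      (fun u => (hmd u).deriv) t 0
  have hm0 : m 0 = y 0 := by
    have : ((-0 : ℝ)) • L = (0 : A →L[ℝ] A) := by rw [neg_zero]; exact zero_smul ℝ L
    simp only [hm, this, exp_zero, ContinuousLinearMap.one_apply]
  have hmt : exp ((-t) • L) (y t) = y 0 := by rw [← hm0]; exact hconst
  have hinv : exp (t • L) * exp ((-t) • L) = 1 := by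
    have hns : (-t) • L = -(t • L) := neg_smul t L
    have hco : Commute (t • L) ((-t) • L) := by
      rw [hns]; exact (Commute.refl (t • L)).neg_right
    letI : NormedAlgebra ℚ (A →L[ℝ] A) := NormedAlgebra.restrictScalars ℚ ℝ (A →L[ℝ] A)
    rw [← exp_add_of_commute hco, hns, add_neg_cancel, exp_zero]
  calc y t = (exp (t • L) * exp ((-t) • L)) (y t) := by
        rw [hinv, ContinuousLinearMap.one_apply]
    _ = exp (t • L) (exp ((-t) • L) (y t)) := rfl
    _ = exp (t • L) (y 0) := by rw [hmt]

/-- cocycle relation: with `W_t := exp(t(D+R_b))(1)` for a bounded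
derivation `D` and right multiplication `R_b`, one has `W_{s+t} = exp(tD)(W_s)·W_t`. -/
theorem stmt7 (A : Type*) [NormedRing A] [NormedAlgebra ℝ A] [CompleteSpace A]
    (D : A →L[ℝ] A) (hD : ∀ x y : A, D (x * y) = D x * y + x * D y)
    (b : A) (Rb : A →L[ℝ] A) (hRb : ∀ x : A, Rb x = x * b)
    (W : ℝ → A) (hW : ∀ t : ℝ, W t = NormedSpace.exp (t • (D + Rb)) 1)
    (s t : ℝ) :
    W (s + t) = NormedSpace.exp (t • D) (W s) * W t := by
  set L : A →L[ℝ] A := D + Rb with hL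
  -- W solves the ODE y' = L y
  have hWd : ∀ u : ℝ, HasDerivAt W (L (W u)) u := by
    intro u
    have h1 : HasDerivAt (fun v : ℝ => exp (v • L)) (L * exp (u • L)) u :=
      hasDerivAt_exp_smul_const' L u
    have h2 := h1.clm_apply (hasDerivAt_const u (1 : A))
    have hWe : W = fun v : ℝ => exp (v • L) 1 := funext hW
    rw [hWe]
    simpa [ContinuousLinearMap.mul_apply, ← hW u] using h2
  -- exp(u•D) applied to a constant
  have hEd : ∀ u : ℝ, HasDerivAt (fun v : ℝ => exp (v • D) (W s))
      (D (exp (u • D) (W s))) u := by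
    intro u
    have h1 : HasDerivAt (fun v : ℝ => exp (v • D)) (D * exp (u • D)) u :=
      hasDerivAt_exp_smul_const' D u
    simpa [ContinuousLinearMap.mul_apply] using h1.clm_apply (hasDerivAt_const u (W s))
  -- the candidate solution h u = exp(u•D)(W s) * W u solves the same ODE
  set h : ℝ → A := fun u => exp (u • D) (W s) * W u with hh
  have hhd : ∀ u : ℝ, HasDerivAt h (L (h u)) u := by
    intro u
    have := (hEd u).mul (hWd u)
    have heq : D (exp (u • D) (W s)) * W u + exp (u • D) (W s) * L (W u)
        = L (h u) := by
      simp only [hL, ContinuousLinearMap.add_apply, hRb, hh, hD, mul_add, mul_assoc, add_assoc]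
    rw [heq] at this
    exact this
  -- the translated solution
  have hyd : ∀ u : ℝ, HasDerivAt (fun u : ℝ => W (s + u)) (L (W (s + u))) u := by
    intro u
    have h2 : HasDerivAt (fun u : ℝ => s + u) (1 : ℝ) u := by
      simpa using (hasDerivAt_id u).const_add s
    have := (hWd (s + u)).scomp u h2
    rw [one_smul] at this
    exact this
  have e1 : W (s + t) = exp (t • L) (W (s + 0)) := ode_exp_unique L _ hyd t
  have e2 : h t = exp (t • L) (h 0) := ode_exp_unique L h hhd t
  have hW0 : W 0 = 1 := by
    rw [hW 0, zero_smul ℝ (D + Rb), exp_zero, ContinuousLinearMap.one_apply]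
  have h0 : h 0 = W s := by
    have hz : (0 : ℝ) • D = (0 : A →L[ℝ] A) := zero_smul ℝ D
    simp only [hh, hz, exp_zero, ContinuousLinearMap.one_apply, hW0, mul_one]
  have hs0 : W (s + 0) = W s := by norm_num
  have : W (s + t) = h t := by rw [e1, e2, h0, hs0]
  simpa [hh] using this
end

section
/- Let A be a unital Banach algebra, D : A → A a bounded derivation (a bounded linear map with D(x·y) = D(x)·y + x·D(y)), and b ∈ A. Let R_b : A → A be right multiplication, R_b(x) := x·b, and set W_t := exp(t(D + R_b))(1), the exponential of the bounded operator t(D + R_b) applied to the unit 1. Then t ↦ W_t is differentiable, W_0 = 1, and dW_t/dt = exp(tD)(b)·W_t for every t ∈ ℝ. -/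
open NormedSpace in
/-- with `W_t := exp(t(D+R_b))(1)` for a bounded derivation `D` and right
multiplication `R_b`, the map `t ↦ W_t` is differentiable, `W_0 = 1`, and
`dW_t/dt = exp(tD)(b)·W_t`. -/
theorem stmt8 (A : Type*) [NormedRing A] [NormedAlgebra ℝ A] [CompleteSpace A]
    (D : A →L[ℝ] A) (hD : ∀ x y : A, D (x * y) = D x * y + x * D y)
    (b : A) (Rb : A →L[ℝ] A) (hRb : ∀ x : A, Rb x = x * b)
    (W : ℝ → A) (hW : ∀ t : ℝ, W t = NormedSpace.exp (t • (D + Rb)) 1) :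
    W 0 = 1 ∧
    ∀ t : ℝ, HasDerivAt W (NormedSpace.exp (t • D) b * W t) t := by
  set L : A →L[ℝ] A := D + Rb with hL
  have hD1 : D 1 = 0 := by
    have h := hD 1 1
    simp only [one_mul, mul_one] at h
    exact (left_eq_add.mp h)
  have hzs : ∀ M : A →L[ℝ] A, exp ((0:ℝ) • M) = 1 := by
    intro M
    have : (0:ℝ) • M = 0 := zero_smul ℝ M
    rw [this, exp_zero]
  have hW0 : W 0 = 1 := by
    rw [hW, hzs, ContinuousLinearMap.one_apply]
  -- commutation of scalar multiples of an operator
  have hcommL : ∀ (M : A →L[ℝ] A) (a c : ℝ), Commute (a • M) (c • M) := by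
    intro M a c
    unfold Commute SemiconjBy
    ext x
    simp [ContinuousLinearMap.mul_apply, map_smul, smul_smul, mul_comm]
  have hcommL' : ∀ (M : A →L[ℝ] A) (a : ℝ), Commute M (a • M) := by
    intro M a
    unfold Commute SemiconjBy
    ext x
    simp [ContinuousLinearMap.mul_apply, map_smul]
  -- derivative of t ↦ exp(t•M) v
  have hderiv : ∀ (M : A →L[ℝ] A) (v : A) (t : ℝ),
      HasDerivAt (fun u : ℝ => exp (u • M) v) (M (exp (t • M) v)) t := by
    intro M v t
    have h1 := (hasDerivAt_exp_smul_const' (𝕂 := ℝ) M t).clm_apply (hasDerivAt_const t v)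
    simpa only [ContinuousLinearMap.mul_apply, map_zero, add_zero] using h1
  have hWd : ∀ t : ℝ, HasDerivAt W (L (W t)) t := by
    intro t
    have hfe : W = fun u : ℝ => exp (u • L) 1 := funext hW
    rw [hfe]
    exact hderiv L 1 t
  have hcomm : ∀ s : ℝ, Commute (exp (s • L)) L :=
    fun s => ((hcommL' L s).symm.exp_left)
  have hLapp : ∀ x : A, L x = D x + x * b := by
    intro x; simp [hL, hRb]
  -- the function u
  set u : ℝ → A := fun t => exp (t • L) b - exp (t • D) b * W t with hu
  have hu' : ∀ t : ℝ, HasDerivAt u (L (u t)) t := by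
    intro t
    have hf : HasDerivAt (fun s : ℝ => exp (s • L) b) (L (exp (t • L) b)) t :=
      hderiv L b t
    have hg1 : HasDerivAt (fun s : ℝ => exp (s • D) b) (D (exp (t • D) b)) t :=
      hderiv D b t
    have hg : HasDerivAt (fun s : ℝ => exp (s • D) b * W s)
        (D (exp (t • D) b) * W t + exp (t • D) b * (L (W t))) t :=
      hg1.mul (hWd t)
    have hsub := hf.sub hg
    convert hsub using 1
    case e'_4 => rfl
    case e'_8 => rfl
    rw [hu]
    simp only [map_sub]
    rw [hLapp (exp (t • D) b * W t), hD, hLapp (W t)]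
    noncomm_ring
  have hu0 : u 0 = 0 := by
    simp [hu, hW0, hzs]
  -- g t := exp(-t•L) (u t) is constant
  set g : ℝ → A := fun t => exp ((-t) • L) (u t) with hg
  have hg' : ∀ t : ℝ, HasDerivAt g 0 t := by
    intro t
    have h1 : HasDerivAt (fun s : ℝ => exp ((-s) • L)) (-(L * exp ((-t) • L))) t := by
      have h2 := HasDerivAt.scomp (x := t)
        (hasDerivAt_exp_smul_const' (𝕂 := ℝ) L (-t)) (hasDerivAt_neg t)
      simpa only [Function.comp_def, neg_one_smul] using h2
    have h2 := h1.clm_apply (hu' t)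
    have key : exp ((-t) • L) (L (u t)) = (L * exp ((-t) • L)) (u t) := by
      rw [← (hcomm (-t)).eq]
      simp [ContinuousLinearMap.mul_apply]
    have : (-(L * exp ((-t) • L))) (u t) + exp ((-t) • L) (L (u t)) = 0 := by
      rw [key]; simp
    rw [hg]
    simpa only [this] using h2
  have hconst : ∀ t : ℝ, g t = g 0 := by
    intro t
    apply is_const_of_deriv_eq_zero (fun s => (hg' s).differentiableAt) _ t 0
    intro s
    exact (hg' s).deriv
  have hinv : ∀ t : ℝ, exp (t • L) * exp ((-t) • L) = 1 := by
    intro t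
    rw [← exp_add_of_commute_of_mem_ball (𝕂 := ℝ) (hcommL L t (-t))
      ((expSeries_radius_eq_top ℝ (A →L[ℝ] A)).symm ▸ edist_lt_top _ _)
      ((expSeries_radius_eq_top ℝ (A →L[ℝ] A)).symm ▸ edist_lt_top _ _)]
    have : t • L + (-t) • L = 0 := by module
    rw [this, exp_zero]
  have hu_zero : ∀ t : ℝ, u t = 0 := by
    intro t
    have h0 : g 0 = 0 := by simp [hg, hu0]
    have happ : exp (t • L) (g t) = u t := by
      rw [hg]
      have h3 := congrArg (fun M : A →L[ℝ] A => M (u t)) (hinv t)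
      simpa [ContinuousLinearMap.mul_apply] using h3
    rw [← happ, hconst t, h0, map_zero]
  refine ⟨hW0, fun t => ?_⟩
  have key : L (W t) = exp (t • D) b * W t := by
    have h1 : L (W t) = exp (t • L) b := by
      rw [hW]
      have h4 : L (exp (t • L) 1) = (L * exp (t • L)) 1 := rfl
      rw [h4, ← (hcomm t).eq]
      simp only [ContinuousLinearMap.mul_apply]
      congr 1
      rw [hLapp, hD1, zero_add, one_mul]
    have h2 := hu_zero t
    rw [hu] at h2
    rw [h1, sub_eq_zero.mp h2]
  rw [← key]
  exact hWd t
end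

section
/- Let A be a unital Banach algebra, D : A → A a bounded derivation (a bounded linear map with D(x·y) = D(x)·y + x·D(y)), and b ∈ A. Let R_b : A → A be right multiplication, R_b(x) := x·b, set W_t := exp(t(D + R_b))(1), and let ad_b : A → A be the bounded linear map ad_b(x) := b·x − x·b. Then W_t is invertible in A for every t ∈ ℝ, and W_t⁻¹·exp(tD)(x)·W_t = exp(t(D − ad_b))(x) for all x ∈ A and t ∈ ℝ. -/
open NormedSpace

private lemma exp_ode {A : Type*} [NormedRing A] [NormedAlgebra ℝ A] [CompleteSpace A]
    (T : A →L[ℝ] A) (f : ℝ → A) (hf : ∀ t, HasDerivAt f (T (f t)) t) (t : ℝ) :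
    f t = exp (t • T) (f 0) := by
  set g : ℝ → A := fun u => exp ((-u) • T) (f u) with hg
  have hgd : ∀ s : ℝ, HasDerivAt g 0 s := by
    intro s
    have h1 : HasDerivAt (fun u : ℝ => exp ((-u) • T))
        ((-1 : ℝ) • (exp ((-s) • T) * T)) s :=
      (hasDerivAt_exp_smul_const (𝕂 := ℝ) T (-s)).scomp s (hasDerivAt_neg s)
    have h2 := h1.clm_apply (hf s)
    convert h2 using 1
    · rfl
    simp [ContinuousLinearMap.mul_apply]
  have hconst : ∀ s : ℝ, g s = g 0 := by
    intro s
    exact is_const_of_deriv_eq_zero (fun u => (hgd u).differentiableAt)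
      (fun u => (hgd u).deriv) s 0
  have h0 : (0 : ℝ) • T = 0 := by ext x; simp
  have hneg : (-t) • T = -(t • T) := by ext x; simp
  have h3 : exp (t • T) * exp ((-t) • T) = 1 := by
    rw [hneg, ← exp_add_of_commute_of_mem_ball (𝕂 := ℝ) (Commute.refl (t • T)).neg_right
      ((expSeries_radius_eq_top ℝ (A →L[ℝ] A)).symm ▸ edist_lt_top _ _)
      ((expSeries_radius_eq_top ℝ (A →L[ℝ] A)).symm ▸ edist_lt_top _ _)]
    simp [exp_zero]
  have h4 := hconst t
  simp only [hg, neg_zero, h0, exp_zero, ContinuousLinearMap.one_apply] at h4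
  calc f t = (exp (t • T) * exp ((-t) • T)) (f t) := by
        rw [h3]; simp
    _ = exp (t • T) (exp ((-t) • T) (f t)) := rfl
    _ = exp (t • T) (f 0) := by rw [h4]

private lemma exp_fix_one {A : Type*} [NormedRing A] [NormedAlgebra ℝ A] [CompleteSpace A]
    (T : A →L[ℝ] A) (hT : T 1 = 0) (t : ℝ) : exp (t • T) (1 : A) = 1 := by
  have := exp_ode T (fun _ => (1 : A)) (fun s => by simpa [hT] using hasDerivAt_const s (1 : A)) t
  exact this.symm

/-- with `W_t := exp(t(D+R_b))(1)` for a bounded derivation `D`, right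
multiplication `R_b`, and `ad_b(x) = b·x − x·b`, each `W_t` is invertible and
`W_t⁻¹·exp(tD)(x)·W_t = exp(t(D − ad_b))(x)`. -/
theorem stmt9 (A : Type*) [NormedRing A] [NormedAlgebra ℝ A] [CompleteSpace A]
    (D : A →L[ℝ] A) (hD : ∀ x y : A, D (x * y) = D x * y + x * D y)
    (b : A) (Rb : A →L[ℝ] A) (hRb : ∀ x : A, Rb x = x * b)
    (adb : A →L[ℝ] A) (hadb : ∀ x : A, adb x = b * x - x * b)
    (W : ℝ → A) (hW : ∀ t : ℝ, W t = NormedSpace.exp (t • (D + Rb)) 1) :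
    (∀ t : ℝ, IsUnit (W t)) ∧
    ∀ (t : ℝ) (x : A),
      Ring.inverse (W t) * NormedSpace.exp (t • D) x * W t =
        NormedSpace.exp (t • (D - adb)) x := by
  have hWf : W = fun t => exp (t • (D + Rb)) 1 := funext hW
  have h0 : ∀ N : A →L[ℝ] A, (0 : ℝ) • N = 0 := fun N => by ext x; simp
  set L : A →L[ℝ] A := D + Rb with hL
  set Lb : A →L[ℝ] A := ContinuousLinearMap.mul ℝ A b with hLb
  have hLbap : ∀ x : A, Lb x = b * x := fun x => rfl
  set M : A →L[ℝ] A := D - Lb with hM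
  set V : ℝ → A := fun t => exp (t • M) 1 with hV
  have hD1 : D 1 = 0 := by
    have := hD 1 1
    simp at this
    linear_combination (norm := noncomm_ring) this
  have hadb1 : adb 1 = 0 := by simp [hadb]
  -- derivatives
  have hWd : ∀ t, HasDerivAt W (L (W t)) t := by
    intro t
    rw [hWf]
    have := (hasDerivAt_exp_smul_const' (𝕂 := ℝ) L t).clm_apply (hasDerivAt_const t (1 : A))
    simpa [ContinuousLinearMap.mul_apply] using this
  have hVd : ∀ t, HasDerivAt V (M (V t)) t := by
    intro t
    have := (hasDerivAt_exp_smul_const' (𝕂 := ℝ) M t).clm_apply (hasDerivAt_const t (1 : A))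
    simpa [ContinuousLinearMap.mul_apply] using this
  have hEd : ∀ (x : A) (t : ℝ), HasDerivAt (fun t => exp (t • D) x) (D (exp (t • D) x)) t := by
    intro x t
    have := (hasDerivAt_exp_smul_const' (𝕂 := ℝ) D t).clm_apply (hasDerivAt_const t x)
    simpa [ContinuousLinearMap.mul_apply] using this
  have hW0 : W 0 = 1 := by simp [hWf, h0, exp_zero]
  have hV0 : V 0 = 1 := by simp [hV, h0, exp_zero]
  -- V t * W t = 1
  have hVW : ∀ t, V t * W t = 1 := by
    intro t
    have hf : ∀ t, HasDerivAt (fun t => V t * W t) ((D - adb) (V t * W t)) t := by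
      intro t
      have := (hVd t).mul (hWd t)
      convert this using 1
      · rfl
      simp only [hM, hL, ContinuousLinearMap.sub_apply, ContinuousLinearMap.add_apply,
        hLbap, hRb, hadb, hD]
      noncomm_ring
    have := exp_ode (D - adb) (fun t => V t * W t) hf t
    rw [this, hV0, hW0, mul_one]
    exact exp_fix_one _ (by simp [hD1, hadb1]) t
  -- W t * V t = 1
  have hWV : ∀ t, W t * V t = 1 := by
    intro t
    have hf : ∀ t, HasDerivAt (fun t => W t * V t) (D (W t * V t)) t := by
      intro t
      have := (hWd t).mul (hVd t)
      convert this using 1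
      · rfl
      simp only [hM, hL, ContinuousLinearMap.sub_apply, ContinuousLinearMap.add_apply,
        hLbap, hRb, hD]
      noncomm_ring
    have := exp_ode D (fun t => W t * V t) hf t
    rw [this, hV0, hW0, mul_one]
    exact exp_fix_one _ hD1 t
  have hUnit : ∀ t, IsUnit (W t) := fun t => ⟨⟨W t, V t, hWV t, hVW t⟩, rfl⟩
  refine ⟨hUnit, ?_⟩
  intro t x
  have hinv : Ring.inverse (W t) = V t := by
    have := Ring.inverse_unit (⟨W t, V t, hWV t, hVW t⟩ : Aˣ)
    simpa using this
  rw [hinv]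
  have hf : ∀ t, HasDerivAt (fun t => V t * exp (t • D) x * W t)
      ((D - adb) (V t * exp (t • D) x * W t)) t := by
    intro t
    have := ((hVd t).mul (hEd x t)).mul (hWd t)
    convert this using 1
    · rfl
    simp only [hM, hL, ContinuousLinearMap.sub_apply, ContinuousLinearMap.add_apply,
      hLbap, hRb, hadb, hD, Pi.mul_apply]
    noncomm_ring
  have := exp_ode (D - adb) (fun t => V t * exp (t • D) x * W t) hf t
  rw [this, hV0, hW0]
  simp [h0, exp_zero]
end

section
/- Let F_{μν} : ℝ⁴ → ℝ (0 ≤ μ,ν ≤ 3) be Schwartz functions satisfying antisymmetry F_{μν} = −F_{νμ}. Let e ∈ ℝ⁴, e ≠ 0, and define A_μ(x) := ∫₀^∞ Σ_{ν=0}^{3} F_{μν}(x + se)·e^ν ds. Let ε₀ = 1 and ε₁ = ε₂ = ε₃ = −1. Then: (a) Σ_{μ=0}^{3} e^μ·A_μ(x) = 0 for all x (axiality); and (b) if Σ_{μ=0}^{3} ε_μ·∂_μF_{μν}(x) = 0 for all ν and all x, then Σ_{μ=0}^{3} ε_μ·∂_μA_μ(x) = 0 for all x (transversality). -/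
open MeasureTheory

section Helpers

variable {V : Type*} [NormedAddCommGroup V] [NormedSpace ℝ V]

lemma my_decay2 (f : SchwartzMap (Fin 4 → ℝ) V) : ∃ C : ℝ, ∀ z, ‖f z‖ * (1 + ‖z‖)^2 ≤ C := by
  refine ⟨2 ^ 2 * (Finset.Iic ((2,0) : ℕ × ℕ)).sup (fun m => SchwartzMap.seminorm ℝ m.1 m.2) f,
    fun z => ?_⟩
  have := SchwartzMap.one_add_le_sup_seminorm_apply (𝕜 := ℝ) (m := ((2,0) : ℕ × ℕ))
    (k := 2) (n := 0) le_rfl le_rfl f z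
  rw [norm_iteratedFDeriv_zero, mul_comm] at this
  exact this

lemma my_pt_bound (h : (Fin 4 → ℝ) → V) (C : ℝ)
    (hh : ∀ z, ‖h z‖ * (1 + ‖z‖)^2 ≤ C) (e : Fin 4 → ℝ) (he : e ≠ 0)
    (R : ℝ) (y : Fin 4 → ℝ) (hy : ‖y‖ ≤ R) (s : ℝ) :
    ‖h (y + s • e)‖ ≤ (C * ((‖e‖ + R + 1) / ‖e‖)^2) * ((1 + |s|)^2)⁻¹ := by
  have he' : 0 < ‖e‖ := norm_pos_iff.mpr he
  have hR : 0 ≤ R := le_trans (norm_nonneg y) hy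
  set z := y + s • e with hz
  have h1 : ‖h z‖ * (1 + ‖z‖)^2 ≤ C := hh z
  have h2 : (1 + |s|) * ‖e‖ ≤ (‖e‖ + R + 1) * (1 + ‖z‖) := by
    have : |s| * ‖e‖ ≤ ‖z‖ + R := by
      have h' : ‖s • e‖ ≤ ‖z‖ + ‖y‖ := by
        have : s • e = z - y := by simp [hz]
        rw [this]
        exact (norm_sub_le _ _).trans (by linarith [norm_nonneg z])
      rw [norm_smul, Real.norm_eq_abs] at h'
      linarith
    nlinarith [norm_nonneg z]
  have h3 : ((1 + |s|) * ‖e‖)^2 ≤ ((‖e‖ + R + 1) * (1 + ‖z‖))^2 :=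
    pow_le_pow_left₀ (by positivity) h2 2
  have key : ‖h z‖ * ((1 + |s|)^2 * ‖e‖^2) ≤ C * (‖e‖ + R + 1)^2 := by
    have h4 : ‖h z‖ * ((1 + |s|) * ‖e‖)^2 ≤ ‖h z‖ * ((‖e‖ + R + 1) * (1 + ‖z‖))^2 :=
      mul_le_mul_of_nonneg_left h3 (norm_nonneg _)
    have h6 : (‖h z‖ * (1 + ‖z‖)^2) * (‖e‖ + R + 1)^2 ≤ C * (‖e‖ + R + 1)^2 :=
      mul_le_mul_of_nonneg_right h1 (by positivity)
    nlinarith [h4, h6]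
  rw [← div_eq_mul_inv, le_div_iff₀ (by positivity), div_pow, mul_div_assoc',
    le_div_iff₀ (by positivity)]
  nlinarith [key]

lemma my_integrable_bound (c : ℝ) : Integrable (fun s : ℝ => c * ((1 + |s|)^2)⁻¹) := by
  have h := (integrable_one_add_norm (E := ℝ) (μ := (volume : Measure ℝ)) (r := 2) (by norm_num)).const_mul c
  refine h.congr (Filter.Eventually.of_forall fun s => ?_)
  show c * (1 + ‖s‖) ^ (-(2:ℝ)) = c * ((1 + |s|)^2)⁻¹
  rw [Real.norm_eq_abs, Real.rpow_neg (by positivity),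
    show ((2:ℝ) = ((2:ℕ):ℝ)) by norm_num, Real.rpow_natCast]

lemma my_ray_int (h : (Fin 4 → ℝ) → V) (hc : Continuous h) (C : ℝ)
    (hh : ∀ z, ‖h z‖ * (1 + ‖z‖)^2 ≤ C) (e : Fin 4 → ℝ) (he : e ≠ 0) (y : Fin 4 → ℝ) :
    Integrable (fun s : ℝ => h (y + s • e)) := by
  refine (my_integrable_bound (C * ((‖e‖ + ‖y‖ + 1) / ‖e‖)^2)).mono'
    ((hc.comp (by continuity)).aestronglyMeasurable)
    (Filter.Eventually.of_forall fun s => ?_)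
  exact my_pt_bound h C hh e he ‖y‖ y le_rfl s

end Helpers

lemma my_fderiv_cont (f : SchwartzMap (Fin 4 → ℝ) ℝ) :
    Continuous fun z => fderiv ℝ (⇑f) z := by
  have heq : ⇑(SchwartzMap.fderivCLM ℝ _ _ f) = fun z => fderiv ℝ (⇑f) z :=
    funext fun z => SchwartzMap.fderivCLM_apply (𝕜 := ℝ) f z
  rw [← heq]
  exact (SchwartzMap.fderivCLM ℝ _ _ f).continuous

lemma my_fderiv_decay (f : SchwartzMap (Fin 4 → ℝ) ℝ) :
    ∃ C : ℝ, ∀ z, ‖fderiv ℝ (⇑f) z‖ * (1 + ‖z‖)^2 ≤ C := by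
  obtain ⟨C, hC⟩ := my_decay2 (SchwartzMap.fderivCLM ℝ _ _ f)
  exact ⟨C, fun z => by simpa [SchwartzMap.fderivCLM_apply (𝕜 := ℝ)] using hC z⟩

lemma my_hasFDerivAt (f : SchwartzMap (Fin 4 → ℝ) ℝ) (e : Fin 4 → ℝ) (he : e ≠ 0)
    (x : Fin 4 → ℝ) :
    HasFDerivAt (fun y => ∫ s in Set.Ioi (0:ℝ), f (y + s • e))
      (∫ s in Set.Ioi (0:ℝ), fderiv ℝ (⇑f) (x + s • e)) x := by
  obtain ⟨C, hC⟩ := my_fderiv_decay f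
  obtain ⟨C0, hC0⟩ := my_decay2 f
  have hline : ∀ y : Fin 4 → ℝ, Continuous fun s : ℝ => y + s • e := fun y => by continuity
  apply hasFDerivAt_integral_of_dominated_of_fderiv_le (𝕜 := ℝ)
    (F := fun y s => f (y + s • e))
    (F' := fun y s => fderiv ℝ (⇑f) (y + s • e))
    (bound := fun s => (C * ((‖e‖ + (‖x‖ + 1) + 1) / ‖e‖)^2) * ((1 + |s|)^2)⁻¹)
    (s := Metric.ball x 1) (Metric.ball_mem_nhds x one_pos)
  · exact Filter.Eventually.of_forall fun y =>
      ((f.continuous.comp (hline y)).aestronglyMeasurable)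
  · exact (my_ray_int ⇑f f.continuous C0 hC0 e he x).integrableOn
  · exact (((my_fderiv_cont f).comp (hline x)).aestronglyMeasurable)
  · refine Filter.Eventually.of_forall fun s y hy => ?_
    have hy' : ‖y‖ ≤ ‖x‖ + 1 := by
      have h1 := mem_ball_iff_norm.mp hy
      have h2 : ‖y‖ - ‖x‖ ≤ ‖y - x‖ := norm_sub_norm_le y x
      linarith
    exact my_pt_bound _ C hC e he (‖x‖ + 1) y hy' s
  · exact (my_integrable_bound _).restrict
  · refine Filter.Eventually.of_forall fun s y hy => ?_
    have h1 : HasFDerivAt (⇑f) (fderiv ℝ (⇑f) (y + s • e)) (y + s • e) :=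
      f.differentiableAt.hasFDerivAt
    have h2 : HasFDerivAt (fun y : Fin 4 → ℝ => y + s • e)
        (ContinuousLinearMap.id ℝ (Fin 4 → ℝ)) y := (hasFDerivAt_id y).add_const (s • e)
    simpa [Function.comp_def] using h1.comp y h2

/-- for an antisymmetric Schwartz field strength, the string-integrated
potential `A_μ(x) = ∫₀^∞ Σ_ν F_{μν}(x+se) e^ν ds` is (a) axial: `Σ_μ e^μ A_μ = 0`, and
(b) transversal, `Σ_μ ε_μ ∂_μA_μ = 0`, provided `Σ_μ ε_μ ∂_μF_{μν} = 0` for all `ν`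
(with Minkowski signs `ε₀ = 1`, `ε₁ = ε₂ = ε₃ = −1`). -/
theorem stmt16
    (F : Fin 4 → Fin 4 → SchwartzMap (Fin 4 → ℝ) ℝ)
    (hanti : ∀ (μ ν : Fin 4) (x : Fin 4 → ℝ), F μ ν x = -(F ν μ x))
    (e : Fin 4 → ℝ) (he : e ≠ 0)
    (A : Fin 4 → (Fin 4 → ℝ) → ℝ)
    (hA : ∀ (μ : Fin 4) (x : Fin 4 → ℝ),
      A μ x = ∫ s in Set.Ioi (0:ℝ), ∑ ν : Fin 4, F μ ν (x + s • e) * e ν)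
    (ε : Fin 4 → ℝ) (hε : ∀ μ : Fin 4, ε μ = if μ = 0 then 1 else -1) :
    (∀ x : Fin 4 → ℝ, ∑ μ : Fin 4, e μ * A μ x = 0) ∧
    ((∀ (ν : Fin 4) (x : Fin 4 → ℝ),
        ∑ μ : Fin 4, ε μ * fderiv ℝ (fun y => F μ ν y) x (Pi.single μ 1) = 0) →
      ∀ x : Fin 4 → ℝ,
        ∑ μ : Fin 4, ε μ * fderiv ℝ (A μ) x (Pi.single μ 1) = 0) := by
  classical
  set f : Fin 4 → SchwartzMap (Fin 4 → ℝ) ℝ := fun μ => ∑ ν : Fin 4, e ν • F μ ν with hf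
  have hco : ∀ (μ : Fin 4) (z : Fin 4 → ℝ), f μ z = ∑ ν : Fin 4, F μ ν z * e ν := by
    intro μ z
    have h1 := congrFun (map_sum (FunLike.coeAddMonoidHom (SchwartzMap (Fin 4 → ℝ) ℝ) (Fin 4 → ℝ) ℝ)
      (fun ν => e ν • F μ ν) Finset.univ) z
    simp only [FunLike.coeAddMonoidHom_apply, AddMonoidHom.coe_mk, ZeroHom.coe_mk, Finset.sum_apply,
      SchwartzMap.smul_apply, smul_eq_mul] at h1
    rw [hf]
    refine h1.trans ?_
    exact Finset.sum_congr rfl fun ν _ => mul_comm _ _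
  have hrepr : ∀ μ : Fin 4, A μ = fun x => ∫ s in Set.Ioi (0:ℝ), f μ (x + s • e) := by
    intro μ; funext x; rw [hA]
    congr 1; funext s; exact (hco μ _).symm
  have hint : ∀ (μ : Fin 4) (y : Fin 4 → ℝ),
      Integrable (fun s : ℝ => f μ (y + s • e)) (volume.restrict (Set.Ioi 0)) := by
    intro μ y
    obtain ⟨C, hC⟩ := my_decay2 (f μ)
    exact (my_ray_int _ (f μ).continuous C hC e he y).restrict
  constructor
  · intro x
    have h1 : ∀ μ : Fin 4, e μ * A μ x
        = ∫ s in Set.Ioi (0:ℝ), e μ * f μ (x + s • e) := by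
      intro μ; rw [hrepr μ]
      exact (integral_const_mul _ _).symm
    rw [Finset.sum_congr rfl fun μ _ => h1 μ,
      ← integral_finset_sum _ (fun μ _ => (hint μ x).const_mul _)]
    have hzero : ∀ s : ℝ, ∑ μ : Fin 4, e μ * f μ (x + s • e) = 0 := by
      intro s
      set z := x + s • e
      have h2 : ∑ μ : Fin 4, e μ * f μ z
          = ∑ μ : Fin 4, ∑ ν : Fin 4, e μ * (F μ ν z * e ν) := by
        refine Finset.sum_congr rfl fun μ _ => ?_
        rw [hco, Finset.mul_sum]
      have h3 : (∑ μ : Fin 4, ∑ ν : Fin 4, e μ * (F μ ν z * e ν))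
          = -∑ μ : Fin 4, ∑ ν : Fin 4, e μ * (F μ ν z * e ν) := by
        conv_lhs => rw [Finset.sum_comm]
        rw [← Finset.sum_neg_distrib]
        refine Finset.sum_congr rfl fun μ _ => ?_
        rw [← Finset.sum_neg_distrib]
        refine Finset.sum_congr rfl fun ν _ => ?_
        rw [hanti ν μ z]; ring
      rw [h2]; linarith
    simp only [hzero, integral_zero]
  · intro hM x
    have hder : ∀ μ : Fin 4, fderiv ℝ (A μ) x
        = ∫ s in Set.Ioi (0:ℝ), fderiv ℝ (⇑(f μ)) (x + s • e) := by
      intro μ; rw [hrepr μ]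
      exact (my_hasFDerivAt (f μ) e he x).fderiv
    have hintD : ∀ μ : Fin 4,
        Integrable (fun s : ℝ => fderiv ℝ (⇑(f μ)) (x + s • e))
          (volume.restrict (Set.Ioi 0)) := by
      intro μ
      obtain ⟨C, hC⟩ := my_fderiv_decay (f μ)
      exact (my_ray_int _ (my_fderiv_cont (f μ)) C hC e he x).restrict
    have happ : ∀ μ : Fin 4, fderiv ℝ (A μ) x (Pi.single μ 1)
        = ∫ s in Set.Ioi (0:ℝ), fderiv ℝ (⇑(f μ)) (x + s • e) (Pi.single μ 1) := by
      intro μ; rw [hder μ]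
      exact ContinuousLinearMap.integral_apply (hintD μ) _
    have h1 : ∀ μ : Fin 4, ε μ * fderiv ℝ (A μ) x (Pi.single μ 1)
        = ∫ s in Set.Ioi (0:ℝ), ε μ * fderiv ℝ (⇑(f μ)) (x + s • e) (Pi.single μ 1) := by
      intro μ; rw [happ μ]
      exact (integral_const_mul _ _).symm
    have hintS : ∀ μ : Fin 4,
        Integrable (fun s : ℝ => ε μ * fderiv ℝ (⇑(f μ)) (x + s • e) (Pi.single μ 1))
          (volume.restrict (Set.Ioi 0)) := by
      intro μ
      exact ((hintD μ).apply_continuousLinearMap (Pi.single μ 1)).const_mul _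
    rw [Finset.sum_congr rfl fun μ _ => h1 μ, ← integral_finset_sum _ (fun μ _ => hintS μ)]
    have hzero : ∀ s : ℝ, ∑ μ : Fin 4,
        ε μ * fderiv ℝ (⇑(f μ)) (x + s • e) (Pi.single μ 1) = 0 := by
      intro s
      set z := x + s • e
      have hfd : ∀ μ : Fin 4, fderiv ℝ (⇑(f μ)) z (Pi.single μ 1)
          = ∑ ν : Fin 4, e ν * fderiv ℝ (⇑(F μ ν)) z (Pi.single μ 1) := by
        intro μ
        have hcoe : ⇑(f μ) = fun y => ∑ ν : Fin 4, e ν * F μ ν y := by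
          funext y
          rw [hco]
          exact Finset.sum_congr rfl fun ν _ => mul_comm _ _
        rw [hcoe, fderiv_fun_sum (fun ν _ => ((F μ ν).differentiableAt.const_mul (e ν)))]
        rw [ContinuousLinearMap.sum_apply]
        refine Finset.sum_congr rfl fun ν _ => ?_
        rw [fderiv_const_mul (F μ ν).differentiableAt (e ν)]
        simp
      have h2 : ∑ μ : Fin 4, ε μ * fderiv ℝ (⇑(f μ)) z (Pi.single μ 1)
          = ∑ μ : Fin 4, ∑ ν : Fin 4,
              e ν * (ε μ * fderiv ℝ (⇑(F μ ν)) z (Pi.single μ 1)) := by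
        refine Finset.sum_congr rfl fun μ _ => ?_
        rw [hfd, Finset.mul_sum]
        exact Finset.sum_congr rfl fun ν _ => by ring
      rw [h2, Finset.sum_comm]
      refine Finset.sum_eq_zero fun ν _ => ?_
      rw [← Finset.mul_sum]
      have := hM ν z
      rw [this, mul_zero]
    simp only [hzero, integral_zero]
end
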